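/- arXiv:0809.4425 — 5 statements merged into one kernel-verified Lean document; each statement's English description precedes it below -/
import Mathlib

section
/- Let n ≥ 1 and let L_n = det(X_i^{2^{s−1}})_{1≤s,i≤n} ∈ F_2[X_1,…,X_n]. Then the intersection, over all nonzero vectors φ = (φ_1,…,φ_n) ∈ F_2^n, of the principal ideals generated by the linear forms ℓ_φ = φ_1 X_1 + ⋯ + φ_n X_n equals the principal ideal generated by L_n; consequently this intersection is a free F_2[X_1,…,X_n]-module on the single generator L_n. -/
set_option maxHeartbeats 1000000
set_option synthInstance.maxHeartbeats 400000

open scoped BigOperators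

noncomputable section

/-- The polynomial part `F_p[x_1,…,x_m]`. -/
abbrev Rp (p m : ℕ) := MvPolynomial (Fin m) (ZMod p)

/-- The model `A = F_p[x_1,…,x_m] ⊗ Λ(a_1,…,a_m)` of the mod-`p` cohomology ring of an
elementary abelian `p`-group of rank `m`, realized as the exterior algebra over the
polynomial ring `Rp p m` on the free module of rank `m`. -/
abbrev Ap (p m : ℕ) := ExteriorAlgebra (Rp p m) (Fin m → Rp p m)

/-- The degree-one exterior generators `a_i`. -/
def aa (p m : ℕ) (i : Fin m) : Ap p m := ExteriorAlgebra.ι (Rp p m) (Pi.single i 1)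

/-- The degree-two polynomial generators `x_i`. -/
def xx (p m : ℕ) (i : Fin m) : Ap p m := algebraMap (Rp p m) (Ap p m) (MvPolynomial.X i)

/-- The ordered product `a_{i_1} ⋯ a_{i_r}` over a subset `S = {i_1 < ⋯ < i_r}`. -/
def aProd (p m : ℕ) (S : Finset (Fin m)) : Ap p m := ((S.sort (· ≤ ·)).map (aa p m)).prod

/-- `N_r = F_p[x_1,…,x_m] ⊗ Λ^r`, the `Rp p m`-submodule of `Ap p m` spanned by the products
`a_{i_1} ⋯ a_{i_r}` with `i_1 < ⋯ < i_r`. -/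
def Nsub (p m : ℕ) (r : ℕ) : Submodule (Rp p m) (Ap p m) :=
  Submodule.span (Rp p m) {z | ∃ S : Finset (Fin m), S.card = r ∧ z = aProd p m S}

/-- `a_φ = Σ_i φ_i a_i` for `φ ∈ F_p^m`. -/
def aphi (p m : ℕ) (φ : Fin m → ZMod p) : Ap p m :=
  ∑ i : Fin m, (MvPolynomial.C (φ i) : Rp p m) • aa p m i

/-- `x_φ = Σ_i φ_i x_i` for `φ ∈ F_p^m`. -/
def xphi (p m : ℕ) (φ : Fin m → ZMod p) : Ap p m :=
  ∑ i : Fin m, (MvPolynomial.C (φ i) : Rp p m) • xx p m i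

/-- The essential ideal `Ess(A) = ⋂_{φ ≠ 0} (a_φ, x_φ)`, the intersection over all nonzero
`φ ∈ F_p^m` of the two-sided ideals of `A` generated by `a_φ` and `x_φ`. -/
def Ess (p m : ℕ) : Set (Ap p m) :=
  ⋂ φ ∈ {φ : Fin m → ZMod p | φ ≠ 0},
    (TwoSidedIdeal.span {aphi p m φ, xphi p m φ} : Set (Ap p m))

/-- The `m × m` Moore matrix with entries `C_{s,i} = x_i^{p^{s-1}}` (zero-based: row `s`
has entries `x_i^{p^s}`). -/
def moore (p m : ℕ) : Matrix (Fin m) (Fin m) (Rp p m) :=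
  Matrix.of fun s i => (MvPolynomial.X i) ^ (p ^ (s : ℕ))

/-- `L_m = det C`, the Moore determinant. -/
def Ldet (p m : ℕ) : Rp p m := (moore p m).det

/-- `γ_{s,i}`: the determinant of the minor of the Moore matrix obtained by deleting
row `s` and column `i` (here the rank is `n+1`). -/
def gam (p n : ℕ) (s i : Fin (n + 1)) : Rp p (n + 1) :=
  ((moore p (n + 1)).submatrix s.succAbove i.succAbove).det

/-- The Mùi invariant `M_{n,s} = Σ_i (-1)^{i+1} γ_{s,i} a_i` (zero-based sign `(-1)^i`). -/
def Mui (p n : ℕ) (s : Fin (n + 1)) : Ap p (n + 1) :=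
  ∑ i : Fin (n + 1), (((-1) ^ (i : ℕ) * gam p n s i : Rp p (n + 1))) • aa p (n + 1) i


open MvPolynomial

/-! ### Auxiliary material for Statement 1 -/

lemma zmod2_eq_one {a : ZMod 2} (h : a ≠ 0) : a = 1 := by revert h; revert a; decide

lemma zmod2_isUnit_eq_one : ∀ a : ZMod 2, IsUnit a → a = 1 := by decide

lemma isUnit_eq_one : ∀ (k : ℕ) (f : MvPolynomial (Fin k) (ZMod 2)), IsUnit f → f = 1 := by
  intro k
  induction k with
  | zero =>
    intro f hf
    have e := MvPolynomial.isEmptyAlgEquiv (ZMod 2) (Fin 0)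
    have h1 : e f = 1 := zmod2_isUnit_eq_one _ (hf.map e)
    have := congrArg e.symm h1
    simpa using this
  | succ m ih =>
    intro f hf
    have e := MvPolynomial.finSuccEquiv (ZMod 2) m
    obtain ⟨r, hr, hC⟩ := Polynomial.isUnit_iff.mp (hf.map e)
    have hr1 : r = 1 := ih r hr
    have h1 : e f = 1 := by rw [← hC, hr1, map_one]
    have := congrArg e.symm h1
    simpa using this

instance subsingleton_units (n : ℕ) : Subsingleton (Rp 2 n)ˣ := by
  constructor
  intro u v
  ext
  rw [isUnit_eq_one n _ u.isUnit, isUnit_eq_one n _ v.isUnit]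

/-- The linear form `ℓ_φ`. -/
def lin (n : ℕ) (φ : Fin n → ZMod 2) : Rp 2 n :=
  ∑ i : Fin n, C (φ i) * X i

lemma coeff_lin (n : ℕ) (φ : Fin n → ZMod 2) (i : Fin n) :
    coeff (Finsupp.single i 1) (lin n φ) = φ i := by
  classical
  rw [lin, coeff_sum]
  rw [Finset.sum_eq_single i]
  · simp [coeff_C_mul, coeff_X]
  · intro j _ hj
    rw [coeff_C_mul, coeff_X', if_neg, mul_zero]
    intro h
    exact hj (Finsupp.single_left_injective (one_ne_zero (α := ℕ)) h)
  · simp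

lemma lin_injective (n : ℕ) : Function.Injective (lin n) := by
  intro φ ψ h
  funext i
  rw [← coeff_lin n φ i, ← coeff_lin n ψ i, h]

lemma lin_ne_zero (n : ℕ) {φ : Fin n → ZMod 2} (hφ : φ ≠ 0) : lin n φ ≠ 0 := by
  intro h
  apply hφ
  have : lin n φ = lin n 0 := by rw [h, lin]; simp
  exact lin_injective n this

lemma lin_isHomogeneous (n : ℕ) (φ : Fin n → ZMod 2) : (lin n φ).IsHomogeneous 1 :=
  IsHomogeneous.sum _ _ _ (fun i _ => isHomogeneous_C_mul_X _ _)

lemma factor_const {n D : ℕ} {g c : MvPolynomial (Fin n) (ZMod 2)}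
    (hg : g.IsHomogeneous D) (hgc : (g * c).IsHomogeneous D) (hne : g * c ≠ 0) :
    c = C (coeff 0 c) := by
  have hg0 : g ≠ 0 := fun h => hne (by rw [h, zero_mul])
  have key : ∀ k, 1 ≤ k → homogeneousComponent k c = 0 := by
    intro k hk
    by_cases hdeg : c.totalDegree < k
    · exact homogeneousComponent_eq_zero k c hdeg
    push_neg at hdeg
    have hsum : g * c = ∑ j ∈ Finset.range (c.totalDegree + 1),
        g * homogeneousComponent j c := by
      rw [← Finset.mul_sum, sum_homogeneousComponent]
    have happ := congrArg (homogeneousComponent (D + k)) hsum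
    rw [map_sum] at happ
    have hleft : homogeneousComponent (D + k) (g * c) = 0 := by
      rw [homogeneousComponent_of_mem ((mem_homogeneousSubmodule _ _).mpr hgc)]
      rw [if_neg (by omega)]
    have hright : ∀ j ∈ Finset.range (c.totalDegree + 1),
        homogeneousComponent (D + k) (g * homogeneousComponent j c)
          = if D + k = D + j then g * homogeneousComponent j c else 0 := by
      intro j _
      exact homogeneousComponent_of_mem ((mem_homogeneousSubmodule _ _).mpr
        (hg.mul (homogeneousComponent_isHomogeneous j c)))
    rw [Finset.sum_congr rfl hright] at happ
    simp only [add_right_inj] at happ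
    rw [Finset.sum_ite_eq (Finset.range (c.totalDegree + 1)) k
      (fun j => g * homogeneousComponent j c)] at happ
    rw [if_pos (Finset.mem_range.mpr (by omega))] at happ
    have : g * homogeneousComponent k c = 0 := by rw [← happ, hleft]
    rcases mul_eq_zero.mp this with h | h
    · exact absurd h hg0
    · exact h
  have := sum_homogeneousComponent c
  rw [← homogeneousComponent_zero]
  calc c = ∑ j ∈ Finset.range (c.totalDegree + 1), homogeneousComponent j c := this.symm
    _ = homogeneousComponent 0 c := by
        rw [Finset.sum_eq_single 0]
        · intro j _ hj; exact key j (by omega)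
        · simp

lemma prime_X_fin (n : ℕ) (j : Fin n) : Prime (X j : MvPolynomial (Fin n) (ZMod 2)) := by
  cases n with
  | zero => exact j.elim0
  | succ m =>
    have h0 : Prime (X (0 : Fin (m+1)) : MvPolynomial (Fin (m+1)) (ZMod 2)) := by
      have hiff := (MulEquiv.prime_iff (MvPolynomial.finSuccEquiv (ZMod 2) m).toMulEquiv
        (p := (X (0 : Fin (m+1)) : MvPolynomial (Fin (m+1)) (ZMod 2)))).symm
      rw [hiff]
      have h2 : ((MvPolynomial.finSuccEquiv (ZMod 2) m).toMulEquiv (X 0)) = Polynomial.X :=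
        MvPolynomial.finSuccEquiv_X_zero
      rw [h2]
      exact Polynomial.prime_X
    have hiff := (MulEquiv.prime_iff (MvPolynomial.renameEquiv (ZMod 2)
        (Equiv.swap (0 : Fin (m+1)) j)).toMulEquiv
      (p := (X (0 : Fin (m+1)) : MvPolynomial (Fin (m+1)) (ZMod 2)))).symm
    rw [hiff] at h0
    have h3 : (MvPolynomial.renameEquiv (ZMod 2)
        (Equiv.swap (0 : Fin (m+1)) j)).toMulEquiv (X 0) = X j := by
      show (MvPolynomial.renameEquiv (ZMod 2) (Equiv.swap (0 : Fin (m+1)) j)) (X 0) = X j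
      rw [MvPolynomial.renameEquiv_apply, MvPolynomial.rename_X, Equiv.swap_apply_left]
    rwa [h3] at h0

lemma prime_lin (n : ℕ) {φ : Fin n → ZMod 2} (hφ : φ ≠ 0) : Prime (lin n φ) := by
  classical
  obtain ⟨j, hj⟩ : ∃ j, φ j ≠ 0 := by
    by_contra h
    push_neg at h
    exact hφ (funext fun i => h i)
  have hj1 : φ j = 1 := zmod2_eq_one hj
  set s : MvPolynomial (Fin n) (ZMod 2) :=
    ∑ i ∈ Finset.univ.erase j, C (φ i) * X i with hs
  have hlin : lin n φ = X j + s := by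
    rw [lin, ← Finset.add_sum_erase _ _ (Finset.mem_univ j), hj1, map_one, one_mul]
  set f : MvPolynomial (Fin n) (ZMod 2) →ₐ[ZMod 2] MvPolynomial (Fin n) (ZMod 2) :=
    aeval (Function.update X j (lin n φ)) with hf
  have hfX : ∀ i, f (X i) = Function.update X j (lin n φ) i := fun i => aeval_X _ i
  have hfXj : f (X j) = lin n φ := by rw [hfX, Function.update_self]
  have hfXi : ∀ i, i ≠ j → f (X i) = X i := fun i hi => by
    rw [hfX, Function.update_of_ne hi]
  have hfs : f s = s := by
    rw [hs, map_sum]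
    refine Finset.sum_congr rfl fun i hi => ?_
    rw [map_mul, hfXi i (Finset.ne_of_mem_erase hi)]
    congr 1
    exact aeval_C _ _
  have hflin : f (lin n φ) = X j := by
    rw [hlin, map_add, hfXj, hfs, hlin, add_assoc, CharTwo.add_self_eq_zero, add_zero]
  have hff : f.comp f = AlgHom.id _ _ := by
    apply MvPolynomial.algHom_ext
    intro i
    by_cases hij : i = j
    · subst hij
      simp only [AlgHom.comp_apply, AlgHom.id_apply]
      rw [hfXj, hflin]
    · simp only [AlgHom.comp_apply, AlgHom.id_apply]
      rw [hfXi i hij, hfXi i hij]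
  set e : MvPolynomial (Fin n) (ZMod 2) ≃ₐ[ZMod 2] MvPolynomial (Fin n) (ZMod 2) :=
    AlgEquiv.ofAlgHom f f hff hff with he
  have hiff := (MulEquiv.prime_iff e.toMulEquiv (p := (X j : MvPolynomial (Fin n) (ZMod 2)))).symm
  have heX : e.toMulEquiv (X j) = lin n φ := hfXj
  rw [heX] at hiff
  exact hiff.mp (prime_X_fin n j)

lemma zmod2_pow (a : ZMod 2) (s : ℕ) : a ^ (2 ^ s) = a := by
  induction s with
  | zero => rw [pow_zero, pow_one]
  | succ k ih => rw [pow_succ, pow_mul, ih, ← ZMod.pow_card a]; norm_num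

lemma lin_pow (n : ℕ) (φ : Fin n → ZMod 2) (s : ℕ) :
    (lin n φ) ^ (2 ^ s) = ∑ i : Fin n, C (φ i) * (X i) ^ (2 ^ s) := by
  rw [lin, sum_pow_char_pow]
  refine Finset.sum_congr rfl fun i _ => ?_
  rw [mul_pow, ← map_pow, zmod2_pow]

lemma lin_dvd_Ldet (n : ℕ) {φ : Fin n → ZMod 2} (hφ : φ ≠ 0) : lin n φ ∣ Ldet 2 n := by
  classical
  obtain ⟨j, hj⟩ : ∃ j, φ j ≠ 0 := by
    by_contra h; push_neg at h; exact hφ (funext fun i => h i)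
  have hj1 : φ j = 1 := zmod2_eq_one hj
  set M := moore 2 n with hM
  have h1 : (M.updateCol j (fun k => ∑ i, (C (φ i) : Rp 2 n) • M k i)).det
      = (C (φ j) : Rp 2 n) • M.det := Matrix.det_updateCol_sum M j (fun i => C (φ i))
  have hcol : (fun k => ∑ i, (C (φ i) : Rp 2 n) • M k i)
      = fun (k : Fin n) => lin n φ * ((lin n φ) ^ (2 ^ (k : ℕ) - 1)) := by
    funext k
    have : ∑ i, (C (φ i) : Rp 2 n) • M k i = (lin n φ) ^ (2 ^ (k : ℕ)) := by
      rw [lin_pow]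
      refine Finset.sum_congr rfl fun i _ => ?_
      rw [smul_eq_mul]; rfl
    rw [this, ← pow_succ']
    congr 1
    have : (1 : ℕ) ≤ 2 ^ (k : ℕ) := Nat.one_le_two_pow
    omega
  have hcol2 : (fun (k : Fin n) => lin n φ * ((lin n φ) ^ (2 ^ (k : ℕ) - 1)))
      = (lin n φ) • (fun (k : Fin n) => (lin n φ) ^ (2 ^ (k : ℕ) - 1)) := rfl
  rw [hcol, hcol2, Matrix.det_updateCol_smul, hj1, map_one, one_smul] at h1
  exact ⟨_, h1.symm⟩

lemma det_char2 {n : ℕ} (M : Matrix (Fin n) (Fin n) (Rp 2 n)) :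
    M.det = ∑ σ : Equiv.Perm (Fin n), ∏ i, M (σ i) i := by
  rw [Matrix.det_apply]
  refine Finset.sum_congr rfl fun σ _ => ?_
  rcases Int.units_eq_one_or (Equiv.Perm.sign σ) with h | h <;> rw [h]
  · rw [one_smul]
  · rw [Units.smul_def]
    push_cast
    rw [neg_smul, one_smul]
    exact (CharTwo.neg_eq _)

lemma sum_two_pow (n : ℕ) : ∑ i : Fin n, 2 ^ (i : ℕ) = 2 ^ n - 1 := by
  rw [Fin.sum_univ_eq_sum_range]
  induction n with
  | zero => simp
  | succ k ih =>
    rw [Finset.sum_range_succ, ih, pow_succ]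
    have : 1 ≤ 2 ^ k := Nat.one_le_two_pow
    omega

lemma perm_prod_isHomogeneous {n : ℕ} (σ : Equiv.Perm (Fin n)) :
    (∏ i, moore 2 n (σ i) i).IsHomogeneous (2 ^ n - 1) := by
  have h := IsHomogeneous.prod Finset.univ (fun i => moore 2 n (σ i) i)
    (fun i => 2 ^ ((σ i : Fin n) : ℕ)) (fun i _ => isHomogeneous_X_pow _ _)
  have hsum : ∑ i : Fin n, 2 ^ ((σ i : Fin n) : ℕ) = 2 ^ n - 1 := by
    rw [Equiv.sum_comp σ (fun i : Fin n => 2 ^ (i : ℕ)), sum_two_pow]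
  rwa [hsum] at h

lemma Ldet_isHomogeneous (n : ℕ) : (Ldet 2 n).IsHomogeneous (2 ^ n - 1) := by
  rw [Ldet, det_char2]
  exact IsHomogeneous.sum _ _ _ (fun σ _ => perm_prod_isHomogeneous σ)

lemma Ldet_ne_zero (n : ℕ) : Ldet 2 n ≠ 0 := by
  classical
  set m0 : Fin n →₀ ℕ := ∑ i : Fin n, Finsupp.single i (2 ^ (i : ℕ)) with hm0
  have hcoeff : coeff m0 (Ldet 2 n) = 1 := by
    rw [Ldet, det_char2, coeff_sum]
    have hterm : ∀ σ : Equiv.Perm (Fin n),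
        coeff m0 (∏ i, moore 2 n (σ i) i) = if σ = 1 then 1 else 0 := by
      intro σ
      have hprod : (∏ i, moore 2 n (σ i) i)
          = monomial (∑ i : Fin n, Finsupp.single i (2 ^ ((σ i : Fin n) : ℕ))) 1 := by
        rw [monomial_sum_one]
        refine Finset.prod_congr rfl fun i _ => ?_
        rw [moore]
        exact X_pow_eq_monomial
      rw [hprod, coeff_monomial]
      by_cases hσ : σ = 1
      · subst hσ; rw [if_pos, if_pos rfl]
        simp [hm0]
      · rw [if_neg, if_neg hσ]
        intro heq
        apply hσ
        have hfun : ∀ j : Fin n, 2 ^ ((σ j : Fin n) : ℕ) = 2 ^ (j : ℕ) := by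
          intro j
          have := congrArg (fun f : Fin n →₀ ℕ => f j) heq
          simpa [hm0, Finsupp.finset_sum_apply, Finsupp.single_apply] using this
        ext j
        have := Nat.pow_right_injective (le_refl 2) (hfun j)
        simpa using this
    rw [Finset.sum_congr rfl (fun σ _ => hterm σ),
      Finset.sum_ite_eq' Finset.univ 1 (fun _ => (1 : ZMod 2))]
    simp
  intro h
  rw [h, coeff_zero] at hcoeff
  exact one_ne_zero hcoeff.symm

/-- The finite set of nonzero `φ`. -/
def s0 (n : ℕ) : Finset (Fin n → ZMod 2) :=
  Finset.univ.filter (fun φ => φ ≠ 0)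

lemma s0_card (n : ℕ) : (s0 n).card = 2 ^ n - 1 := by
  classical
  rw [s0, Finset.filter_ne', Finset.card_erase_of_mem (Finset.mem_univ _)]
  rw [Finset.card_univ]
  congr 1
  rw [Fintype.card_fun]
  simp [ZMod.card]

lemma prod_lin_dvd (n : ℕ) (y : Rp 2 n)
    (h : ∀ φ : Fin n → ZMod 2, φ ≠ 0 → lin n φ ∣ y) :
    (∏ φ ∈ s0 n, lin n φ) ∣ y := by
  classical
  have hinj : ∀ x ∈ s0 n, ∀ z ∈ s0 n, lin n x = lin n z → x = z :=
    fun x _ z _ hxz => lin_injective n hxz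
  have := Finset.prod_primes_dvd (s := (s0 n).image (lin n)) y
    (fun p hp => by
      obtain ⟨φ, hφ, rfl⟩ := Finset.mem_image.mp hp
      exact prime_lin n (by simpa [s0] using hφ))
    (fun p hp => by
      obtain ⟨φ, hφ, rfl⟩ := Finset.mem_image.mp hp
      exact h φ (by simpa [s0] using hφ))
  rwa [Finset.prod_image hinj] at this

lemma Ldet_eq_prod (n : ℕ) : Ldet 2 n = ∏ φ ∈ s0 n, lin n φ := by
  classical
  set P : Rp 2 n := ∏ φ ∈ s0 n, lin n φ with hP
  have hPdvd : P ∣ Ldet 2 n :=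
    prod_lin_dvd n (Ldet 2 n) (fun φ hφ => lin_dvd_Ldet n hφ)
  obtain ⟨c, hc⟩ := hPdvd
  have hPhom : P.IsHomogeneous (2 ^ n - 1) := by
    have h := IsHomogeneous.prod (s0 n) (lin n) (fun _ => 1)
      (fun φ _ => lin_isHomogeneous n φ)
    rwa [Finset.sum_const, smul_eq_mul, mul_one, s0_card] at h
  have hPc : (P * c).IsHomogeneous (2 ^ n - 1) := by
    rw [← hc]; exact Ldet_isHomogeneous n
  have hne : P * c ≠ 0 := by rw [← hc]; exact Ldet_ne_zero n
  have hcC : c = C (coeff 0 c) := factor_const hPhom hPc hne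
  have ha : coeff 0 c ≠ 0 := by
    intro h0
    rw [hcC, h0, map_zero, mul_zero] at hc
    exact Ldet_ne_zero n hc
  have : c = 1 := by rw [hcC, zmod2_eq_one ha, map_one]
  rw [hc, this, mul_one]

lemma main_eq (n : ℕ) :
    (⨅ φ ∈ {φ : Fin n → ZMod 2 | φ ≠ 0},
        Ideal.span {∑ i : Fin n, MvPolynomial.C (φ i) * MvPolynomial.X i})
      = Ideal.span {Ldet 2 n} := by
  classical
  apply le_antisymm
  · intro y hy
    simp only [Ideal.mem_iInf] at hy
    rw [Ideal.mem_span_singleton, Ldet_eq_prod]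
    refine prod_lin_dvd n y (fun φ hφ => ?_)
    have := hy φ hφ
    rwa [Ideal.mem_span_singleton] at this
  · refine le_iInf fun φ => le_iInf fun hφ => ?_
    rw [Ideal.span_singleton_le_span_singleton]
    exact lin_dvd_Ldet n hφ

/-- For `p = 2`, the intersection over all nonzero `φ ∈ F_2^n` of the
principal ideals generated by the linear forms `ℓ_φ = Σ φ_i X_i` equals the principal
ideal generated by `L_n`; consequently this intersection is a free
`F_2[X_1,…,X_n]`-module on the single generator `L_n`. -/
theorem essential_ideal_mod_two (n : ℕ) (hn : 1 ≤ n) :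
    (⨅ φ ∈ {φ : Fin n → ZMod 2 | φ ≠ 0},
        Ideal.span {∑ i : Fin n, MvPolynomial.C (φ i) * MvPolynomial.X i})
      = Ideal.span {Ldet 2 n} ∧
    ∀ y ∈ (⨅ φ ∈ {φ : Fin n → ZMod 2 | φ ≠ 0},
        Ideal.span {∑ i : Fin n, MvPolynomial.C (φ i) * MvPolynomial.X i}),
      ∃! f : Rp 2 n, y = f * Ldet 2 n := by
  classical
  constructor
  · exact main_eq n
  · intro y hy
    rw [main_eq n] at hy
    obtain ⟨f, hf⟩ := Ideal.mem_span_singleton'.mp hy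
    refine ⟨f, hf.symm, fun g hg => ?_⟩
    have hg' : y = g * Ldet 2 n := hg
    have : g * Ldet 2 n = f * Ldet 2 n := by rw [← hg', hf]
    exact mul_right_cancel₀ (Ldet_ne_zero n) this
end
end

section
/- For each 1 ≤ s ≤ n, the Mùi invariant M_{n,s} lies in N_1 ∩ Ess(A); that is, M_{n,s} lies in the two-sided ideal generated by a_φ and x_φ for every nonzero φ ∈ F_p^n. -/
set_option maxHeartbeats 1000000
set_option synthInstance.maxHeartbeats 400000

open scoped BigOperators

noncomputable section

open MvPolynomial in
/-- Frobenius on the linear form. -/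
lemma frob_lin (p m : ℕ) [Fact p.Prime] (φ : Fin m → ZMod p) (t : ℕ) :
    ((∑ k : Fin m, C (φ k) * X k : Rp p m)) ^ (p ^ t)
      = ∑ k : Fin m, C (φ k) * (X k : Rp p m) ^ (p ^ t) := by
  haveI : CharP (Rp p m) p := inferInstance
  rw [sum_pow_char_pow]
  refine Finset.sum_congr rfl fun k _ => ?_
  rw [mul_pow, ← map_pow, ZMod.pow_card_pow]

open MvPolynomial in
/-- The core divisibility: if `φ·w = 0` then the cofactor combination with a constant
vector `w` lies in the ideal generated by the linear form `ℓ = Σ φ_k x_k`. -/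
lemma key_dvd (p n : ℕ) [Fact p.Prime] (s : Fin (n + 1)) (φ w : Fin (n + 1) → ZMod p)
    (j : Fin (n + 1)) (hj : φ j ≠ 0) (hw : (∑ k, φ k * w k) = 0) :
    (∑ k : Fin (n + 1), C (φ k) * X k : Rp p (n + 1)) ∣
      ∑ i : Fin (n + 1), (-1) ^ (i : ℕ) * C (w i) * gam p n s i := by
  set ℓ : Rp p (n + 1) := ∑ k : Fin (n + 1), C (φ k) * X k with hℓ
  set B : Matrix (Fin (n + 1)) (Fin (n + 1)) (Rp p (n + 1)) :=
    (moore p (n + 1)).updateRow s (fun i => C (w i)) with hB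
  have hminor : ∀ i : Fin (n + 1),
      B.submatrix s.succAbove i.succAbove
        = (moore p (n + 1)).submatrix s.succAbove i.succAbove := by
    intro i
    refine Matrix.ext fun t u => ?_
    simp only [hB, Matrix.submatrix_apply]
    exact congrFun (Matrix.updateRow_ne (s.succAbove_ne t)) _
  have hdetB : B.det = ∑ i : Fin (n + 1),
      (-1) ^ ((s : ℕ) + (i : ℕ)) * C (w i) * gam p n s i := by
    rw [Matrix.det_succ_row B s]
    refine Finset.sum_congr rfl fun i _ => ?_
    rw [hminor i]
    simp [hB, gam, Matrix.updateRow_self]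
  have hdvdcol : ∀ t : Fin (n + 1), ℓ ∣ ∑ k, C (φ k) * B t k := by
    intro t
    by_cases ht : t = s
    · have hrow : ∀ k, B t k = C (w k) := fun k => by
        rw [hB, ht]; exact congrFun Matrix.updateRow_self k
      have hz : (∑ k, C (φ k) * B t k : Rp p (n + 1)) = C (∑ k, φ k * w k) := by
        rw [map_sum]
        exact Finset.sum_congr rfl fun k _ => by rw [hrow k, map_mul]
      rw [hz, hw, map_zero]
      exact dvd_zero _
    · have : (∑ k, C (φ k) * B t k : Rp p (n + 1)) = ℓ ^ (p ^ (t : ℕ)) := by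
        have hBt : ∀ k, B t k = (X k : Rp p (n+1)) ^ (p ^ (t : ℕ)) := by
          intro k
          simp only [hB]
          rw [congrFun (Matrix.updateRow_ne ht) k]
          rfl
        simp only [hBt]
        rw [hℓ, frob_lin]
      rw [this]
      exact dvd_pow_self ℓ (pow_ne_zero _ (Nat.Prime.ne_zero Fact.out))
  have hdvd2 : ℓ ∣ C (φ j) * B.det := by
    have hsum := Matrix.det_updateCol_sum B j (fun k => (C (φ k) : Rp p (n + 1)))
    rw [smul_eq_mul] at hsum
    rw [← hsum]
    rw [Matrix.det_succ_column _ j]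
    refine Finset.dvd_sum fun t _ => ?_
    have hentry : (B.updateCol j fun k => ∑ i, (C (φ i) : Rp p (n + 1)) • B k i) t j
        = ∑ k, C (φ k) * B t k := by
      rw [Matrix.updateCol_self]
      exact Finset.sum_congr rfl fun k _ => smul_eq_mul _ _
    exact (((hentry ▸ hdvdcol t).mul_left _).mul_right _)
  have hunit : IsUnit (C (φ j) : Rp p (n + 1)) :=
    (isUnit_iff_ne_zero.mpr hj).map (C : ZMod p →+* Rp p (n + 1))
  have hdvdB : ℓ ∣ B.det := by
    obtain ⟨u, hu⟩ := hunit.exists_left_inv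
    have : B.det = u * (C (φ j) * B.det) := by rw [← mul_assoc, hu, one_mul]
    rw [this]
    exact hdvd2.mul_left u
  have hfinal : (∑ i : Fin (n + 1), (-1) ^ (i : ℕ) * C (w i) * gam p n s i : Rp p (n+1))
      = (-1) ^ (s : ℕ) * B.det := by
    rw [hdetB, Finset.mul_sum]
    refine Finset.sum_congr rfl fun i _ => ?_
    have hsgn : ((-1 : Rp p (n+1)) ^ (s : ℕ)) * (-1) ^ ((s : ℕ) + (i : ℕ))
        = (-1) ^ (i : ℕ) := by
      rw [pow_add, ← mul_assoc, ← pow_add, ← two_mul, pow_mul]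
      norm_num
    linear_combination (-(C (w i) * gam p n s i)) * hsgn
  rw [hfinal]
  exact hdvdB.mul_left _

/-- For each `s`, the Mùi invariant `M_{n,s}` lies in `N_1 ∩ Ess(A)`
(the rank is `n+1`). -/
theorem Mui_mem_N_one_inter_Ess (p n : ℕ) [Fact p.Prime] (hodd : Odd p)
    (s : Fin (n + 1)) :
    Mui p n s ∈ Nsub p (n + 1) 1 ∧ Mui p n s ∈ Ess p (n + 1) := by
  constructor
  · refine Submodule.sum_mem _ fun i _ => Submodule.smul_mem _ _ ?_
    refine Submodule.subset_span ⟨{i}, Finset.card_singleton i, ?_⟩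
    simp [aProd, Finset.sort_singleton]
  · rw [Ess]
    refine Set.mem_iInter₂.mpr fun φ hφ => ?_
    obtain ⟨j, hj'⟩ := Function.ne_iff.mp hφ
    have hj : φ j ≠ 0 := by simpa using hj'
    set I := TwoSidedIdeal.span {aphi p (n+1) φ, xphi p (n+1) φ} with hI
    change Mui p n s ∈ (I : Set (Ap p (n+1)))
    rw [SetLike.mem_coe]
    have haphi : aphi p (n+1) φ ∈ I := TwoSidedIdeal.subset_span (Set.mem_insert _ _)
    have hxphi : xphi p (n+1) φ ∈ I :=
      TwoSidedIdeal.subset_span (Set.mem_insert_of_mem _ rfl)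
    set ℓ : Rp p (n+1) := ∑ k, MvPolynomial.C (φ k) * MvPolynomial.X k with hℓ
    have hxl : xphi p (n+1) φ = algebraMap (Rp p (n+1)) (Ap p (n+1)) ℓ := by
      rw [xphi, hℓ, map_sum]
      exact Finset.sum_congr rfl fun k _ => by rw [map_mul, xx, Algebra.smul_def]
    set e : Fin (n+1) → Rp p (n+1) := fun i =>
      (-1)^(i:ℕ) * gam p n s i
        - (-1)^(j:ℕ) * gam p n s j * MvPolynomial.C ((φ j)⁻¹ * φ i) with he
    set r0 : Rp p (n+1) := (-1)^(j:ℕ) * gam p n s j * MvPolynomial.C (φ j)⁻¹ with hr0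
    have hdecomp : Mui p n s = r0 • aphi p (n+1) φ + ∑ i, e i • aa p (n+1) i := by
      rw [Mui, aphi, Finset.smul_sum, ← Finset.sum_add_distrib]
      refine Finset.sum_congr rfl fun i _ => ?_
      rw [smul_smul, ← add_smul]
      congr 1
      simp only [he, hr0]
      rw [map_mul]
      ring
    rw [hdecomp]
    refine I.add_mem ?_ ?_
    · rw [Algebra.smul_def]
      exact I.mul_mem_left _ _ haphi
    · refine sum_mem fun i _ => ?_
      set wv : Fin (n+1) → ZMod p := fun k =>
        (if k = i then 1 else 0) - (φ j)⁻¹ * φ i * (if k = j then 1 else 0) with hwv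
      have hw : (∑ k, φ k * wv k) = 0 := by
        have hterm : ∀ k, φ k * wv k =
            (if k = i then φ i else 0)
              - (if k = j then φ j * ((φ j)⁻¹ * φ i) else 0) := by
          intro k
          by_cases h2 : k = j
          · subst h2
            by_cases h1 : k = i
            · subst h1
              simp [hwv]
              ring
            · simp [hwv, h1]
          · by_cases h1 : k = i
            · subst h1
              simp [hwv, h2]
            · simp [hwv, h1, h2]
        rw [Finset.sum_congr rfl fun k _ => hterm k, Finset.sum_sub_distrib,
          Finset.sum_ite_eq', Finset.sum_ite_eq']
        simp [← mul_assoc, mul_inv_cancel₀ hj]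
      have hsum : (∑ k : Fin (n+1),
          (-1)^(k:ℕ) * MvPolynomial.C (wv k) * gam p n s k) = e i := by
        have hterm : ∀ k : Fin (n+1),
            ((-1 : Rp p (n+1))^(k:ℕ) * MvPolynomial.C (wv k) * gam p n s k) =
              (if k = i then (-1)^(k:ℕ) * gam p n s k else 0)
                - (if k = j then
                    (-1)^(k:ℕ) * MvPolynomial.C ((φ j)⁻¹ * φ i) * gam p n s k else 0) := by
          intro k
          by_cases h2 : k = j
          · subst h2
            by_cases h1 : k = i
            · subst h1
              simp [hwv, map_sub, map_mul, map_one]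
              try ring
            · simp [hwv, h1, map_sub, map_mul, map_one]
              try ring
          · by_cases h1 : k = i
            · subst h1
              simp [hwv, h2, map_sub, map_mul, map_one]
            · simp [hwv, h1, h2]
        rw [Finset.sum_congr rfl fun k _ => hterm k, Finset.sum_sub_distrib,
          Finset.sum_ite_eq', Finset.sum_ite_eq']
        simp only [he, Finset.mem_univ, if_true]
        ring
      have hdvd : ℓ ∣ e i := hsum ▸ key_dvd p n s φ wv j hj hw
      obtain ⟨q, hq⟩ := hdvd
      rw [hq, mul_smul, Algebra.smul_def, ← hxl]
      exact I.mul_mem_right _ _ hxphi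
end
end

section
/- For subsets S, T ⊆ {1,…,n}: if S ∩ T ≠ ∅ then M_{n,S} M_{n,T} = 0, and if S ∩ T = ∅ then M_{n,S} M_{n,T} = ε L_n M_{n,S∪T} for some sign ε ∈ {+1, −1} (depending on S and T). -/
set_option maxHeartbeats 1000000
set_option synthInstance.maxHeartbeats 400000

open scoped BigOperators

noncomputable section

namespace MuiAux

open MvPolynomial

lemma prod_monomial_one (p m : ℕ) {ι : Type*} (s : Finset ι) (f : ι → (Fin m →₀ ℕ)) :
    ∏ i ∈ s, (MvPolynomial.monomial (f i) (1 : ZMod p)) =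
      MvPolynomial.monomial (∑ i ∈ s, f i) 1 := by
  classical
  induction s using Finset.induction with
  | empty => simp
  | insert _ _ h ih =>
      rw [Finset.prod_insert h, ih, MvPolynomial.monomial_mul, one_mul, Finset.sum_insert h]

lemma sum_single_apply (m : ℕ) (e : Fin m → ℕ) (i : Fin m) :
    (∑ j : Fin m, Finsupp.single j (e j)) i = e i := by
  rw [Finsupp.finset_sum_apply]
  simp [Finsupp.single_apply]

lemma Ldet_ne_zero (p m : ℕ) [Fact p.Prime] : Ldet p m ≠ 0 := by
  classical
  have hp : 2 ≤ p := (Fact.out : p.Prime).two_le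
  haveI : Fact (1 < p) := ⟨hp⟩
  intro h0
  set d : Fin m →₀ ℕ := ∑ s : Fin m, Finsupp.single s (p ^ (s : ℕ)) with hd
  have hc : MvPolynomial.coeff d (Ldet p m) = 1 := by
    rw [Ldet, Matrix.det_apply]
    have hterm : ∀ σ : Equiv.Perm (Fin m),
        (∏ i, moore p m (σ i) i) =
          MvPolynomial.monomial (∑ i : Fin m, Finsupp.single i (p ^ ((σ i : ℕ)))) 1 := by
      intro σ
      rw [← prod_monomial_one p m]
      refine Finset.prod_congr rfl fun i _ => ?_
      rw [moore]
      exact MvPolynomial.X_pow_eq_monomial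
    rw [MvPolynomial.coeff_sum]
    have hstep : ∀ σ : Equiv.Perm (Fin m),
        MvPolynomial.coeff d (Equiv.Perm.sign σ • ∏ i, moore p m (σ i) i) =
          if σ = 1 then 1 else 0 := by
      intro σ
      rw [hterm, Units.smul_def, MvPolynomial.coeff_smul, MvPolynomial.coeff_monomial]
      by_cases hσ : σ = 1
      · subst hσ
        simp [hd]
      · rw [if_neg, if_neg hσ, smul_zero]
        intro heq
        apply hσ
        have hvals : ∀ i : Fin m, p ^ ((σ i : ℕ)) = p ^ ((i : ℕ)) := by
          intro i
          have := congrArg (fun f => f i) heq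
          simpa [hd, sum_single_apply] using this
        ext i
        simp only [Equiv.Perm.one_apply]
        exact Nat.pow_right_injective hp (hvals i)
    rw [Finset.sum_congr rfl fun σ _ => hstep σ]
    simp
  rw [h0] at hc
  simp at hc

end MuiAux

namespace MuiAux

open scoped TensorProduct

/-- The exterior algebra over the base field. -/
abbrev Lam (p m : ℕ) := ExteriorAlgebra (ZMod p) (Fin m → ZMod p)

/-- The generators of the tensor model. -/
def uu (p m : ℕ) (i : Fin m) : (Rp p m) ⊗[ZMod p] (Lam p m) :=
  (1 : Rp p m) ⊗ₜ[ZMod p] ExteriorAlgebra.ι (ZMod p) (Pi.single i 1)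

lemma uu_mul_add_swap (p m : ℕ) [Fact p.Prime] (i j : Fin m) :
    uu p m i * uu p m j + uu p m j * uu p m i = 0 := by
  simp only [uu, Algebra.TensorProduct.tmul_mul_tmul, one_mul, ← TensorProduct.tmul_add]
  rw [ExteriorAlgebra.ι_add_mul_swap, TensorProduct.tmul_zero]

/-- The linear map `v ↦ Σ v_i ⊗ a_i`. -/
def psi (p m : ℕ) : (Fin m → Rp p m) →ₗ[Rp p m] (Rp p m) ⊗[ZMod p] (Lam p m) where
  toFun v := ∑ i : Fin m, v i • uu p m i
  map_add' v w := by simp [add_smul, Finset.sum_add_distrib]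
  map_smul' c v := by simp [Finset.smul_sum, mul_smul]

lemma psi_sq_zero (p m : ℕ) [Fact p.Prime] (hodd : Odd p) (v : Fin m → Rp p m) :
    psi p m v * psi p m v = 0 := by
  classical
  have h2 : (2 : ZMod p) ≠ 0 := by
    have : ((2 : ℕ) : ZMod p) = 0 ↔ p ∣ 2 := ZMod.natCast_eq_zero_iff 2 p
    intro hc
    have hdvd : p ∣ 2 := by
      rw [← this]; exact_mod_cast hc
    have := (Nat.prime_dvd_prime_iff_eq (Fact.out : p.Prime) Nat.prime_two).mp hdvd
    rw [this] at hodd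
    exact (by norm_num : ¬ Odd 2) hodd
  set T := psi p m v * psi p m v with hT
  have hTT : T + T = 0 := by
    have hexp : T = ∑ i : Fin m, ∑ j : Fin m, (v i * v j) • (uu p m i * uu p m j) := by
      rw [hT]
      show (∑ i : Fin m, v i • uu p m i) * (∑ j : Fin m, v j • uu p m j) = _
      rw [Finset.sum_mul_sum]
      exact Finset.sum_congr rfl fun i _ => Finset.sum_congr rfl fun j _ =>
        smul_mul_smul_comm (v i) (uu p m i) (v j) (uu p m j)
    have hswap : T = ∑ i : Fin m, ∑ j : Fin m, (v i * v j) • (uu p m j * uu p m i) := by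
      rw [hexp, Finset.sum_comm]
      exact Finset.sum_congr rfl fun i _ => Finset.sum_congr rfl fun j _ => by
        rw [mul_comm (v j) (v i)]
    calc T + T
        = (∑ i : Fin m, ∑ j : Fin m, (v i * v j) • (uu p m i * uu p m j)) +
          (∑ i : Fin m, ∑ j : Fin m, (v i * v j) • (uu p m j * uu p m i)) := by
          nth_rewrite 1 [hexp]
          nth_rewrite 1 [hswap]
          rfl
      _ = ∑ i : Fin m, ∑ j : Fin m,
            ((v i * v j) • (uu p m i * uu p m j) + (v i * v j) • (uu p m j * uu p m i)) := by
          rw [← Finset.sum_add_distrib]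
          exact Finset.sum_congr rfl fun i _ => (Finset.sum_add_distrib).symm
      _ = 0 := by
          refine Finset.sum_eq_zero fun i _ => Finset.sum_eq_zero fun j _ => ?_
          rw [← smul_add, uu_mul_add_swap, smul_zero]
  have h2T : (2 : ZMod p) • T = 0 := by
    rw [two_smul]
    exact hTT
  calc T = ((2 : ZMod p)⁻¹ * 2) • T := by rw [inv_mul_cancel₀ h2]; rw [one_smul]
    _ = (2 : ZMod p)⁻¹ • ((2 : ZMod p) • T) := by rw [mul_smul]
    _ = 0 := by rw [h2T, smul_zero]

/-- The map `A → R ⊗ Λ`. -/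
def fmap (p m : ℕ) [Fact p.Prime] (hodd : Odd p) :
    Ap p m →ₐ[Rp p m] (Rp p m) ⊗[ZMod p] (Lam p m) :=
  ExteriorAlgebra.lift (Rp p m) ⟨psi p m, psi_sq_zero p m hodd⟩

/-- The coordinatewise inclusion of scalars. -/
def cmap (p m : ℕ) : (Fin m → ZMod p) →ₗ[ZMod p] (Fin m → Rp p m) where
  toFun v i := MvPolynomial.C (v i)
  map_add' v w := by funext i; simp
  map_smul' c v := by funext i; simp [Algebra.smul_def]

/-- The map `Λ → A`. -/
def lamToAp (p m : ℕ) : Lam p m →ₐ[ZMod p] Ap p m :=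
  ExteriorAlgebra.lift (ZMod p)
    ⟨((ExteriorAlgebra.ι (Rp p m)).restrictScalars (ZMod p)).comp (cmap p m),
      fun v => ExteriorAlgebra.ι_sq_zero _⟩

/-- The map `R ⊗ Λ → A`. -/
def gmap (p m : ℕ) : (Rp p m) ⊗[ZMod p] (Lam p m) →ₐ[Rp p m] Ap p m :=
  Algebra.TensorProduct.lift (Algebra.ofId (Rp p m) (Ap p m)) (lamToAp p m)
    (fun x y => by
      show (Algebra.ofId (Rp p m) (Ap p m)) x * lamToAp p m y
          = lamToAp p m y * (Algebra.ofId (Rp p m) (Ap p m)) x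
      rw [Algebra.ofId_apply]
      exact Algebra.commutes x _)

lemma gmap_fmap (p m : ℕ) [Fact p.Prime] (hodd : Odd p) (a : Ap p m) :
    gmap p m (fmap p m hodd a) = a := by
  have : (gmap p m).comp (fmap p m hodd) = AlgHom.id (Rp p m) (Ap p m) := by
    apply ExteriorAlgebra.hom_ext
    apply LinearMap.ext
    intro v
    show gmap p m (fmap p m hodd (ExteriorAlgebra.ι (Rp p m) v)) = ExteriorAlgebra.ι (Rp p m) v
    rw [fmap, ExteriorAlgebra.lift_ι_apply]
    show gmap p m (∑ i : Fin m, v i • uu p m i) = _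
    rw [map_sum]
    have huu : ∀ i : Fin m, gmap p m (uu p m i) = aa p m i := by
      intro i
      rw [gmap, uu, Algebra.TensorProduct.lift_tmul, map_one, one_mul, lamToAp]
      erw [ExteriorAlgebra.lift_ι_apply]
      show ExteriorAlgebra.ι (Rp p m) (cmap p m (Pi.single i 1)) = aa p m i
      rw [aa]
      congr 1
      funext j
      by_cases h : j = i
      · subst h; simp [cmap]
      · simp [cmap, Pi.single_apply, h]
    have : ∑ i : Fin m, gmap p m (v i • uu p m i) = ∑ i : Fin m, v i • aa p m i := by
      refine Finset.sum_congr rfl fun i _ => ?_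
      rw [map_smul, huu]
    rw [this]
    simp only [aa, ← map_smul, ← map_sum]
    congr 1
    funext j
    rw [Finset.sum_apply]
    simp [Pi.single_apply]
  exact DFunLike.congr_fun this a

lemma smul_cancel (p m : ℕ) [Fact p.Prime] (hodd : Odd p) (c : Rp p m) (hc : c ≠ 0)
    {a b : Ap p m} (h : c • a = c • b) : a = b := by
  have hinj : Function.Injective (fmap p m hodd) :=
    Function.LeftInverse.injective (gmap_fmap p m hodd)
  apply hinj
  have h2 : c • (fmap p m hodd a) = c • (fmap p m hodd b) := by
    rw [← map_smul, ← map_smul, h]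
  exact smul_right_injective _ hc h2

end MuiAux

namespace MuiAux

/-- `Mui` is `ι` of an explicit vector. -/
lemma Mui_eq_iota (p n : ℕ) (s : Fin (n + 1)) :
    Mui p n s = ExteriorAlgebra.ι (Rp p (n + 1))
      (∑ i : Fin (n + 1), ((-1) ^ (i : ℕ) * gam p n s i : Rp p (n + 1)) • (Pi.single i 1 : Fin (n + 1) → Rp p (n + 1))) := by
  rw [map_sum, Mui]
  refine Finset.sum_congr rfl fun i _ => ?_
  rw [map_smul, aa]

lemma Mui_sq (p n : ℕ) (s : Fin (n + 1)) : Mui p n s * Mui p n s = 0 := by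
  rw [Mui_eq_iota]; exact ExteriorAlgebra.ι_sq_zero _

lemma Mui_anticomm (p n : ℕ) (s t : Fin (n + 1)) :
    Mui p n s * Mui p n t = -(Mui p n t * Mui p n s) := by
  rw [Mui_eq_iota p n s, Mui_eq_iota p n t]
  exact eq_neg_of_add_eq_zero_left (ExteriorAlgebra.ι_add_mul_swap _ _)

/-- The product of Mùi invariants along a list. -/
def muiProd (p n : ℕ) (l : List (Fin (n + 1))) : Ap p (n + 1) := (l.map (Mui p n)).prod

lemma muiProd_cons (p n : ℕ) (x : Fin (n + 1)) (l : List (Fin (n + 1))) :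
    muiProd p n (x :: l) = Mui p n x * muiProd p n l := by
  rw [muiProd, List.map_cons, List.prod_cons, muiProd]

lemma muiProd_append (p n : ℕ) (l l' : List (Fin (n + 1))) :
    muiProd p n (l ++ l') = muiProd p n l * muiProd p n l' := by
  rw [muiProd, List.map_append, List.prod_append, muiProd, muiProd]

lemma muiProd_cons_cons (p n : ℕ) (s : Fin (n + 1)) (l : List (Fin (n + 1))) :
    muiProd p n (s :: s :: l) = 0 := by
  rw [muiProd_cons, muiProd_cons, ← mul_assoc, Mui_sq, zero_mul]

lemma muiProd_perm (p n : ℕ) {l l' : List (Fin (n + 1))} (h : l.Perm l') :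
    ∃ ε : ℤ, (ε = 1 ∨ ε = -1) ∧ muiProd p n l = ε • muiProd p n l' := by
  induction h with
  | nil => exact ⟨1, Or.inl rfl, (one_smul ℤ _).symm⟩
  | cons x h ih =>
      obtain ⟨ε, hε, he⟩ := ih
      refine ⟨ε, hε, ?_⟩
      rw [muiProd_cons, muiProd_cons, he, mul_smul_comm]
  | swap x y l =>
      refine ⟨-1, Or.inr rfl, ?_⟩
      rw [muiProd_cons, muiProd_cons, muiProd_cons, muiProd_cons, ← mul_assoc, ← mul_assoc,
        Mui_anticomm p n y x, neg_smul, one_smul, neg_mul]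
  | trans h1 h2 ih1 ih2 =>
      obtain ⟨ε1, hε1, he1⟩ := ih1
      obtain ⟨ε2, hε2, he2⟩ := ih2
      refine ⟨ε1 * ε2, ?_, ?_⟩
      · rcases hε1 with rfl | rfl <;> rcases hε2 with rfl | rfl <;> simp
      · rw [he1, he2, smul_smul]

end MuiAux

/-- For subsets `S, T`: if `S ∩ T ≠ ∅` then `M_{n,S} M_{n,T} = 0`; if
`S ∩ T = ∅` then `M_{n,S} M_{n,T} = ε L_n M_{n,S∪T}` for some sign `ε ∈ {1, -1}`.
Here `MS` is the family of Mùi invariants `M_{n,S}`, characterized by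
`L_n^{|S|} M_{n,S} = L_n · (M_{n,s_1} ⋯ M_{n,s_r})` (equivalent to the defining relation
`L_n^{|S|-1} M_{n,S} = M_{n,s_1} ⋯ M_{n,s_r}` since multiplication by `L_n` is injective,
and giving `M_{n,∅} = L_n`). The rank is `n+1`. -/
theorem MuiSet_mul (p n : ℕ) [Fact p.Prime] (hodd : Odd p)
    (MS : Finset (Fin (n + 1)) → Ap p (n + 1))
    (hMS : ∀ S : Finset (Fin (n + 1)),
      (Ldet p (n + 1)) ^ S.card • MS S =
        (Ldet p (n + 1)) • ((S.sort (· ≤ ·)).map (Mui p n)).prod)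
    (S T : Finset (Fin (n + 1))) :
    (S ∩ T ≠ ∅ → MS S * MS T = 0) ∧
    (S ∩ T = ∅ → ∃ ε : ℤ, (ε = 1 ∨ ε = -1) ∧
      MS S * MS T = ε • ((Ldet p (n + 1)) • MS (S ∪ T))) := by
  classical
  set L := Ldet p (n + 1) with hLdef
  have hLne : L ≠ 0 := MuiAux.Ldet_ne_zero p (n + 1)
  have hcancel : ∀ (k : ℕ) (a b : Ap p (n + 1)), L ^ k • a = L ^ k • b → a = b :=
    fun k a b h => MuiAux.smul_cancel p (n + 1) hodd _ (pow_ne_zero k hLne) h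
  have hMS' : ∀ U : Finset (Fin (n + 1)),
      L ^ U.card • MS U = L • MuiAux.muiProd p n (U.sort (· ≤ ·)) := by
    intro U
    rw [MuiAux.muiProd]
    exact hMS U
  have hkey : ∀ (A B : Finset (Fin (n + 1))),
      L ^ (A.card + B.card) • (MS A * MS B) =
        (L * L) • (MuiAux.muiProd p n (A.sort (· ≤ ·)) *
          MuiAux.muiProd p n (B.sort (· ≤ ·))) := by
    intro A B
    rw [pow_add, ← smul_mul_smul_comm, hMS' A, hMS' B, smul_mul_smul_comm]
  constructor
  · intro hne
    obtain ⟨s, hsmem⟩ := Finset.nonempty_iff_ne_empty.mpr hne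
    have hsS : s ∈ S := (Finset.mem_inter.mp hsmem).1
    have hsT : s ∈ T := (Finset.mem_inter.mp hsmem).2
    have hperm : (S.sort (· ≤ ·) ++ T.sort (· ≤ ·)).Perm
        (s :: s :: ((S.erase s).sort (· ≤ ·) ++ (T.erase s).sort (· ≤ ·))) := by
      rw [← Multiset.coe_eq_coe]
      rw [← Multiset.cons_coe, ← Multiset.cons_coe, ← Multiset.coe_add, ← Multiset.coe_add,
        Finset.sort_eq, Finset.sort_eq, Finset.sort_eq, Finset.sort_eq]
      have h1 : s ::ₘ (S.erase s).val = S.val := by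
        rw [Finset.erase_val]
        exact Multiset.cons_erase (Finset.mem_def.mp hsS)
      have h2 : s ::ₘ (T.erase s).val = T.val := by
        rw [Finset.erase_val]
        exact Multiset.cons_erase (Finset.mem_def.mp hsT)
      rw [← h1, ← h2, Multiset.cons_add, Multiset.add_cons]
    obtain ⟨ε, hε, he⟩ := MuiAux.muiProd_perm p n hperm
    have hzero : MuiAux.muiProd p n (S.sort (· ≤ ·)) * MuiAux.muiProd p n (T.sort (· ≤ ·)) = 0 := by
      rw [← MuiAux.muiProd_append, he, MuiAux.muiProd_cons_cons, smul_zero]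
    apply hcancel (S.card + T.card)
    rw [hkey S T, hzero, smul_zero, smul_zero]
  · intro hint
    have hdisj : Disjoint S T := Finset.disjoint_iff_inter_eq_empty.mpr hint
    have hcard : (S ∪ T).card = S.card + T.card := Finset.card_union_of_disjoint hdisj
    have hperm : (S.sort (· ≤ ·) ++ T.sort (· ≤ ·)).Perm ((S ∪ T).sort (· ≤ ·)) := by
      rw [← Multiset.coe_eq_coe]
      rw [← Multiset.coe_add, Finset.sort_eq, Finset.sort_eq, Finset.sort_eq,
        ← Finset.disjUnion_eq_union S T hdisj]
      rfl
    obtain ⟨ε, hε, he⟩ := MuiAux.muiProd_perm p n hperm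
    refine ⟨ε, hε, ?_⟩
    apply hcancel (S.card + T.card)
    calc L ^ (S.card + T.card) • (MS S * MS T)
        = (L * L) • (MuiAux.muiProd p n (S.sort (· ≤ ·)) *
            MuiAux.muiProd p n (T.sort (· ≤ ·))) := hkey S T
      _ = (L * L) • (ε • MuiAux.muiProd p n ((S ∪ T).sort (· ≤ ·))) := by
            rw [← MuiAux.muiProd_append, he]
      _ = ε • ((L * L) • MuiAux.muiProd p n ((S ∪ T).sort (· ≤ ·))) := smul_comm _ _ _
      _ = ε • (L • (L • MuiAux.muiProd p n ((S ∪ T).sort (· ≤ ·)))) := by rw [mul_smul]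
      _ = ε • (L • (L ^ (S ∪ T).card • MS (S ∪ T))) := by rw [hMS' (S ∪ T)]
      _ = ε • (L ^ (S.card + T.card) • (L • MS (S ∪ T))) := by
            rw [hcard, smul_comm L (L ^ (S.card + T.card))]
      _ = L ^ (S.card + T.card) • (ε • (L • MS (S ∪ T))) := smul_comm _ _ _
end
end

section
/- Fix 1 ≤ r ≤ n. An element y ∈ A satisfies y·M_{n,S} = 0 for every subset S ⊆ {1,…,n} of size r if and only if y ∈ ⊕_{s=n−r+1}^{n} N_s. -/
set_option maxHeartbeats 1000000
set_option synthInstance.maxHeartbeats 400000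

open scoped BigOperators

noncomputable section

namespace Anni

open ExteriorAlgebra Matrix

/-- product of a list of generators -/
def lp (p m : ℕ) (l : List (Fin m)) : Ap p m := (l.map (aa p m)).prod

lemma lp_nil (p m : ℕ) : lp p m [] = 1 := rfl

lemma lp_cons (p m : ℕ) (i : Fin m) (l : List (Fin m)) :
    lp p m (i :: l) = aa p m i * lp p m l := by simp [lp]

lemma lp_append (p m : ℕ) (l₁ l₂ : List (Fin m)) :
    lp p m (l₁ ++ l₂) = lp p m l₁ * lp p m l₂ := by simp [lp]

lemma aProd_eq_lp (p m : ℕ) (S : Finset (Fin m)) : aProd p m S = lp p m (S.sort (· ≤ ·)) := rfl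

lemma aa_sq (p m : ℕ) (i : Fin m) : aa p m i * aa p m i = 0 := ExteriorAlgebra.ι_sq_zero _

lemma aa_swap (p m : ℕ) (i j : Fin m) : aa p m i * aa p m j = -(aa p m j * aa p m i) :=
  eq_neg_of_add_eq_zero_left (ExteriorAlgebra.ι_add_mul_swap _ _)

lemma aa_mul_mul (p m : ℕ) (i j : Fin m) (x : Ap p m) :
    aa p m i * (aa p m j * x) = -(aa p m j * (aa p m i * x)) := by
  rw [← mul_assoc, aa_swap, neg_mul, mul_assoc]

lemma aa_mul_lp_of_mem (p m : ℕ) : ∀ {l : List (Fin m)} (i : Fin m), i ∈ l →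
    aa p m i * lp p m l = 0
  | [], i, hi => absurd hi List.not_mem_nil
  | j :: t, i, hi => by
    rcases List.mem_cons.mp hi with h | h
    · subst h
      rw [lp_cons, ← mul_assoc, aa_sq, zero_mul]
    · rw [lp_cons, aa_mul_mul, aa_mul_lp_of_mem p m i h, mul_zero, neg_zero]

lemma aa_mul_lp_orderedInsert (p m : ℕ) : ∀ (l : List (Fin m)) (i : Fin m),
    aa p m i * lp p m l = lp p m (l.orderedInsert (· ≤ ·) i) ∨
    aa p m i * lp p m l = -lp p m (l.orderedInsert (· ≤ ·) i)
  | [], i => Or.inl (by simp [lp_cons])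
  | j :: t, i => by
    by_cases h : i ≤ j
    · simp only [List.orderedInsert, if_pos h]
      exact Or.inl (by simp [lp_cons])
    · simp only [List.orderedInsert, if_neg h]
      rw [lp_cons, aa_mul_mul, lp_cons]
      rcases aa_mul_lp_orderedInsert p m t i with h' | h'
      · rw [h']; exact Or.inr rfl
      · rw [h']; exact Or.inl (by rw [mul_neg, neg_neg])

lemma lp_of_not_nodup (p m : ℕ) : ∀ {l : List (Fin m)}, ¬l.Nodup → lp p m l = 0
  | [], h => absurd List.nodup_nil h
  | i :: t, h => by
    rw [lp_cons]
    by_cases hit : i ∈ t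
    · exact aa_mul_lp_of_mem p m i hit
    · have : ¬t.Nodup := fun ht => h (List.nodup_cons.mpr ⟨hit, ht⟩)
      rw [lp_of_not_nodup p m this, mul_zero]

lemma sort_eq_of_sorted {m : ℕ} {l : List (Fin m)} (hl : l.Pairwise (· < ·)) :
    l.toFinset.sort (· ≤ ·) = l := by
  exact (List.toFinset_sort _ (List.Pairwise.nodup hl)).mpr (hl.imp le_of_lt)

lemma lp_sorted (p m : ℕ) {l : List (Fin m)} (hl : l.Pairwise (· < ·)) :
    lp p m l = aProd p m l.toFinset := by
  rw [aProd_eq_lp, sort_eq_of_sorted hl]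

lemma lp_of_nodup (p m : ℕ) : ∀ {l : List (Fin m)}, l.Nodup →
    lp p m l = aProd p m l.toFinset ∨ lp p m l = -aProd p m l.toFinset
  | [], _ => Or.inl (by rw [lp_nil, aProd_eq_lp]; rw [List.toFinset_nil, Finset.sort_empty, lp_nil])
  | i :: t, h => by
    have hit : i ∉ t := (List.nodup_cons.mp h).1
    have ht : t.Nodup := (List.nodup_cons.mp h).2
    have hit' : i ∉ t.toFinset.sort (· ≤ ·) := by
      simp only [Finset.mem_sort, List.mem_toFinset]; exact hit
    have hins : ((t.toFinset.sort (· ≤ ·)).orderedInsert (· ≤ ·) i).Pairwise (· < ·) := by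
      have h1 : ((t.toFinset.sort (· ≤ ·)).orderedInsert (· ≤ ·) i).Pairwise (· ≤ ·) :=
        (Finset.pairwise_sort _ _).orderedInsert i _
      have h2 : ((t.toFinset.sort (· ≤ ·)).orderedInsert (· ≤ ·) i).Nodup :=
        ((List.perm_orderedInsert _ i _).nodup_iff).mpr
          (List.nodup_cons.mpr ⟨hit', Finset.sort_nodup _ _⟩)
      exact List.sortedLT_iff_pairwise.mp (h1.sortedLE.sortedLT_of_nodup h2)
    have htf : ((t.toFinset.sort (· ≤ ·)).orderedInsert (· ≤ ·) i).toFinset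
        = (i :: t).toFinset := by
      rw [List.toFinset_eq_of_perm _ _ (List.perm_orderedInsert _ i _)]
      simp [Finset.sort_toFinset]
    have key := aa_mul_lp_orderedInsert p m (t.toFinset.sort (· ≤ ·)) i
    rw [lp_cons]
    rcases lp_of_nodup p m ht with h' | h'
    · rw [h', aProd_eq_lp]
      rcases key with k | k
      · rw [k, lp_sorted p m hins, htf]; exact Or.inl rfl
      · rw [k, lp_sorted p m hins, htf]; exact Or.inr rfl
    · rw [h', aProd_eq_lp, mul_neg]
      rcases key with k | k
      · rw [k, lp_sorted p m hins, htf]; exact Or.inr rfl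
      · rw [k, lp_sorted p m hins, htf, neg_neg]; exact Or.inl rfl

lemma aProd_mul_aProd_of_disjoint (p m : ℕ) {U T : Finset (Fin m)} (h : Disjoint U T) :
    aProd p m U * aProd p m T = aProd p m (U ∪ T) ∨
    aProd p m U * aProd p m T = -aProd p m (U ∪ T) := by
  have hl : aProd p m U * aProd p m T
      = lp p m (U.sort (· ≤ ·) ++ T.sort (· ≤ ·)) := by
    rw [lp_append, aProd_eq_lp, aProd_eq_lp]
  have hnd : (U.sort (· ≤ ·) ++ T.sort (· ≤ ·)).Nodup := by
    refine List.Nodup.append (Finset.sort_nodup _ _) (Finset.sort_nodup _ _) ?_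
    intro a ha hb
    exact (Finset.disjoint_left.mp h (by simpa using ha) (by simpa using hb))
  have htf : (U.sort (· ≤ ·) ++ T.sort (· ≤ ·)).toFinset = U ∪ T := by
    simp [List.toFinset_append, Finset.sort_toFinset]
  rw [hl]
  rcases lp_of_nodup p m hnd with h' | h' <;> rw [h', htf]
  · exact Or.inl rfl
  · exact Or.inr rfl

lemma aProd_mul_aProd_of_not_disjoint (p m : ℕ) {U T : Finset (Fin m)}
    (h : ¬Disjoint U T) :
    aProd p m U * aProd p m T = 0 := by
  have hl : aProd p m U * aProd p m T
      = lp p m (U.sort (· ≤ ·) ++ T.sort (· ≤ ·)) := by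
    rw [lp_append, aProd_eq_lp, aProd_eq_lp]
  obtain ⟨a, haU, haT⟩ := Finset.not_disjoint_iff.mp h
  have : ¬(U.sort (· ≤ ·) ++ T.sort (· ≤ ·)).Nodup := by
    intro hnd
    exact (List.disjoint_of_nodup_append hnd) (by simpa using haU) (by simpa using haT)
  rw [hl, lp_of_not_nodup p m this]


/-! ### Coordinate functionals -/

/-- The alternating "minor" map picking out the columns indexed by `S`. -/
def altS (p m : ℕ) (S : Finset (Fin m)) :
    (Fin m → Rp p m) [⋀^Fin (S.sort (· ≤ ·)).length]→ₗ[Rp p m] Rp p m :=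
  (Matrix.detRowAlternating).compLinearMap
    (LinearMap.funLeft (Rp p m) (Rp p m) fun j => (S.sort (· ≤ ·)).get j)

/-- The family of alternating maps defining the coordinate functional at `S`. -/
def fD (p m : ℕ) (S : Finset (Fin m)) (k : ℕ) :
    (Fin m → Rp p m) [⋀^Fin k]→ₗ[Rp p m] Rp p m :=
  if h : (S.sort (· ≤ ·)).length = k then (altS p m S).domDomCongr (finCongr h) else 0

/-- The coordinate functional on the exterior algebra extracting the coefficient
of `aProd S`. -/
def cS (p m : ℕ) (S : Finset (Fin m)) : Ap p m →ₗ[Rp p m] Rp p m :=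
  ExteriorAlgebra.liftAlternating (fD p m S)

lemma aProd_eq_iMulti (p m : ℕ) (T : Finset (Fin m)) :
    aProd p m T = ExteriorAlgebra.ιMulti (Rp p m) (T.sort (· ≤ ·)).length
      (fun j => Pi.single ((T.sort (· ≤ ·)).get j) (1 : Rp p m)) := by
  rw [ExteriorAlgebra.ιMulti_apply, aProd]
  conv_lhs => rw [← List.ofFn_get (T.sort (· ≤ ·))]
  rw [List.map_ofFn]
  rfl

lemma altS_apply (p m : ℕ) (S : Finset (Fin m))
    (v : Fin (S.sort (· ≤ ·)).length → (Fin m → Rp p m)) :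
    altS p m S v = Matrix.det (Matrix.of fun j b => v j ((S.sort (· ≤ ·)).get b)) := rfl

lemma cS_aProd (p m : ℕ) (S T : Finset (Fin m)) :
    cS p m S (aProd p m T) = if S = T then 1 else 0 := by
  rw [aProd_eq_iMulti, cS, ExteriorAlgebra.liftAlternating_apply_ιMulti]
  by_cases h : (S.sort (· ≤ ·)).length = (T.sort (· ≤ ·)).length
  · rw [fD, dif_pos h, AlternatingMap.domDomCongr_apply]
    by_cases hST : S = T
    · subst hST
      rw [if_pos rfl, altS_apply]
      refine Eq.trans ?_ (Matrix.det_one (n := Fin (S.sort (· ≤ ·)).length))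
      congr 1
      funext j b
      have hc : (finCongr h).symm j = j := Fin.ext rfl
      have hc2 : (finCongr h) j = j := Fin.ext rfl
      simp only [Matrix.of_apply, Function.comp_apply, hc, hc2, Pi.single_apply,
        Matrix.one_apply, (Finset.sort_nodup S (· ≤ ·)).get_inj_iff, eq_comm]
    · rw [if_neg hST, altS_apply]
      have hsub : ¬ T ⊆ S := by
        intro hsub
        exact hST (Finset.eq_of_subset_of_card_le hsub (by
          rw [← Finset.length_sort (· ≤ ·), ← Finset.length_sort (α := Fin m) (· ≤ ·), h])).symm
      obtain ⟨t, htT, htS⟩ := Finset.not_subset.mp hsub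
      obtain ⟨j₀, hj₀⟩ := List.mem_iff_get.mp ((Finset.mem_sort (· ≤ ·)).mpr htT)
      refine Matrix.det_eq_zero_of_row_eq_zero ((finCongr h).symm j₀) fun b => ?_
      have : (finCongr h) ((finCongr h).symm j₀) = j₀ := Equiv.apply_symm_apply _ _
      simp only [Matrix.of_apply, Function.comp_apply, this, hj₀, Pi.single_apply]
      rw [if_neg]
      intro hb
      exact htS (hb ▸ (Finset.mem_sort (· ≤ ·)).mp (List.get_mem _ b))
  · have hST : S ≠ T := fun e => h (by rw [e])
    rw [fD, dif_neg h, if_neg hST, AlternatingMap.zero_apply]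

/-! ### Spanning and reconstruction -/

lemma aProd_empty (p m : ℕ) : aProd p m (∅ : Finset (Fin m)) = 1 := by
  rw [aProd, Finset.sort_empty]; rfl

lemma aProd_singleton (p m : ℕ) (i : Fin m) : aProd p m {i} = aa p m i := by
  rw [aProd, Finset.sort_singleton]; simp

lemma aProd_mul_mem_span (p m : ℕ) (U V : Finset (Fin m)) :
    aProd p m U * aProd p m V ∈
      Submodule.span (Rp p m) (Set.range (aProd p m)) := by
  by_cases h : Disjoint U V
  · rcases aProd_mul_aProd_of_disjoint p m h with h' | h' <;> rw [h']
    · exact Submodule.subset_span ⟨U ∪ V, rfl⟩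
    · exact neg_mem (Submodule.subset_span ⟨U ∪ V, rfl⟩)
  · rw [aProd_mul_aProd_of_not_disjoint p m h]
    exact zero_mem _

lemma span_aProd_eq_top (p m : ℕ) :
    Submodule.span (Rp p m) (Set.range (aProd p m)) = ⊤ := by
  rw [eq_top_iff]
  rintro x -
  induction x using ExteriorAlgebra.induction with
  | algebraMap r =>
    rw [Algebra.algebraMap_eq_smul_one, ← aProd_empty p m]
    exact Submodule.smul_mem _ _ (Submodule.subset_span ⟨∅, rfl⟩)
  | ι v =>
    have hv : v = ∑ i : Fin m, (v i • (Pi.single i 1 : Fin m → Rp p m)) := by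
      funext j
      simp [Pi.single_apply, Finset.sum_apply, eq_comm]
    rw [hv, map_sum]
    refine Submodule.sum_mem _ fun i _ => ?_
    rw [_root_.map_smul]
    exact Submodule.smul_mem _ _ (Submodule.subset_span ⟨{i}, aProd_singleton p m i⟩)
  | mul x y hx hy =>
    refine Submodule.span_induction₂
      (p := fun a b _ _ => a * b ∈ Submodule.span (Rp p m) (Set.range (aProd p m)))
      ?_ ?_ ?_ ?_ ?_ ?_ ?_ hx hy
    · rintro _ _ ⟨U, rfl⟩ ⟨V, rfl⟩
      exact aProd_mul_mem_span p m U V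
    · intro x hx; rw [zero_mul]; exact zero_mem _
    · intro x hx; rw [mul_zero]; exact zero_mem _
    · intro x y z hx hy hz h1 h2; rw [add_mul]; exact add_mem h1 h2
    · intro x y z hx hy hz h1 h2; rw [mul_add]; exact add_mem h1 h2
    · intro q x y hx hy h1; rw [smul_mul_assoc]; exact Submodule.smul_mem _ _ h1
    · intro q x y hx hy h1; rw [mul_smul_comm]; exact Submodule.smul_mem _ _ h1
  | add x y hx hy => exact add_mem hx hy

lemma eq_sum_cS (p m : ℕ) (z : Ap p m) :
    z = ∑ S : Finset (Fin m), cS p m S z • aProd p m S := by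
  have : LinearMap.id (R := Rp p m) (M := Ap p m)
      = ∑ S : Finset (Fin m), (cS p m S).smulRight (aProd p m S) := by
    refine LinearMap.ext_on_range (span_aProd_eq_top p m) ?_
    intro T
    simp only [LinearMap.id_apply, LinearMap.sum_apply, LinearMap.smulRight_apply, cS_aProd,
      ite_smul, one_smul, zero_smul]
    rw [Finset.sum_ite_eq' Finset.univ T (fun S => aProd p m S)]
    simp
  conv_lhs => rw [← LinearMap.id_apply (R := Rp p m) z, this]
  simp [LinearMap.sum_apply]

lemma smul_cancel (p m : ℕ) [Fact p.Prime] {q : Rp p m} (hq : q ≠ 0) {z : Ap p m}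
    (h : q • z = 0) : z = 0 := by
  have hz : ∀ S : Finset (Fin m), cS p m S z = 0 := by
    intro S
    have : q * cS p m S z = 0 := by
      rw [← smul_eq_mul, ← _root_.map_smul, h, map_zero]
    rcases mul_eq_zero.mp this with h' | h'
    · exact absurd h' hq
    · exact h'
  rw [eq_sum_cS p m z]
  simp [hz]

/-! ### Membership in the sup of the `Nsub` in terms of coordinates -/

lemma mem_sup_iff (p m a b : ℕ) (y : Ap p m) :
    (y ∈ ⨆ s ∈ Finset.Icc a b, Nsub p m s) ↔
      ∀ U : Finset (Fin m), U.card ∉ Finset.Icc a b → cS p m U y = 0 := by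
  constructor
  · intro hy U hU
    have hle : (⨆ s ∈ Finset.Icc a b, Nsub p m s) ≤
        ⨅ (U : Finset (Fin m)) (_ : U.card ∉ Finset.Icc a b), LinearMap.ker (cS p m U) := by
      refine iSup₂_le fun s hs => ?_
      rw [Nsub, Submodule.span_le]
      rintro _ ⟨S, hScard, rfl⟩
      simp only [SetLike.mem_coe, Submodule.mem_iInf]
      intro V hV
      rw [LinearMap.mem_ker, cS_aProd]
      rw [if_neg]
      rintro rfl
      exact hV (hScard ▸ hs)
    have := hle hy
    simp only [Submodule.mem_iInf, LinearMap.mem_ker] at this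
    exact this U hU
  · intro h
    rw [eq_sum_cS p m y]
    refine Submodule.sum_mem _ fun S _ => ?_
    by_cases hS : S.card ∈ Finset.Icc a b
    · refine Submodule.smul_mem _ _ ?_
      have h1 : aProd p m S ∈ Nsub p m S.card :=
        Submodule.subset_span ⟨S, rfl, rfl⟩
      exact le_iSup₂ (f := fun s (_ : s ∈ Finset.Icc a b) => Nsub p m s) S.card hS h1
    · rw [h S hS, zero_smul]
      exact Submodule.zero_mem _

/-! ### Multiplying by `aProd T` and coordinates -/

lemma key_lin (p m : ℕ) (U T : Finset (Fin m)) (h : Disjoint U T) (e : Rp p m)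
    (he : aProd p m U * aProd p m T = e • aProd p m (U ∪ T)) :
    ∀ y : Ap p m, cS p m (U ∪ T) (y * aProd p m T) = e * cS p m U y := by
  have huv : ∀ V : Finset (Fin m), Disjoint V T → V ≠ U → U ∪ T ≠ V ∪ T := by
    intro V hVT hVU hEq
    refine hVU ?_
    have h1 : V = (V ∪ T) \ T := by
      rw [Finset.union_sdiff_right, Finset.sdiff_eq_self_of_disjoint hVT]
    have h2 : U = (U ∪ T) \ T := by
      rw [Finset.union_sdiff_right, Finset.sdiff_eq_self_of_disjoint h]
    rw [h1, h2, hEq]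
  have hmaps : (cS p m (U ∪ T)).comp (LinearMap.mulRight (Rp p m) (aProd p m T))
      = e • cS p m U := by
    refine LinearMap.ext_on_range (span_aProd_eq_top p m) ?_
    intro V
    simp only [LinearMap.comp_apply, LinearMap.mulRight_apply, LinearMap.smul_apply,
      smul_eq_mul, cS_aProd]
    by_cases hVT : Disjoint V T
    · by_cases hVU : V = U
      · subst hVU
        rw [he, _root_.map_smul, cS_aProd, if_pos rfl, if_pos rfl]
        simp
      · have hne : ¬(U = V) := fun hEq => hVU hEq.symm
        have hne2 : ¬(U ∪ T = V ∪ T) := huv V hVT hVU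
        obtain hd | hd := aProd_mul_aProd_of_disjoint p m hVT
        · rw [hd, cS_aProd, if_neg hne2, if_neg hne, mul_zero]
        · rw [hd, map_neg, cS_aProd, if_neg hne2, if_neg hne, mul_zero, neg_zero]
    · have hne : ¬(U = V) := by
        rintro rfl
        exact hVT h
      rw [aProd_mul_aProd_of_not_disjoint p m hVT, map_zero, if_neg hne, mul_zero]
  intro y
  have := LinearMap.congr_fun hmaps y
  simpa using this

lemma cS_mul_aProd (p m : ℕ) {U T : Finset (Fin m)} (h : Disjoint U T) :
    ∃ e : Rp p m, (e = 1 ∨ e = -1) ∧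
      ∀ y : Ap p m, cS p m (U ∪ T) (y * aProd p m T) = e * cS p m U y := by
  obtain he | he := aProd_mul_aProd_of_disjoint p m h
  · refine ⟨1, Or.inl rfl, ?_⟩
    exact key_lin p m U T h (1 : Rp p m) (by rw [he, one_smul])
  · refine ⟨-1, Or.inr rfl, ?_⟩
    exact key_lin p m U T h (-1 : Rp p m) (by rw [he, neg_smul, one_smul])

/-! ### Expansion of products of `ι`'s -/

lemma iota_eq_sum (p m : ℕ) (v : Fin m → Rp p m) :
    ExteriorAlgebra.ι (Rp p m) v = ∑ i : Fin m, v i • aa p m i := by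
  have hv : v = ∑ i : Fin m, (v i • (Pi.single i 1 : Fin m → Rp p m)) := by
    funext j
    simp [Pi.single_apply, Finset.sum_apply, eq_comm]
  conv_lhs => rw [hv]
  rw [map_sum]
  exact Finset.sum_congr rfl fun i _ => by rw [_root_.map_smul]; rfl

lemma prod_iota_mem_span (p m : ℕ) :
    ∀ l : List (Fin m → Rp p m),
      (l.map (ExteriorAlgebra.ι (Rp p m))).prod ∈
        Submodule.span (Rp p m)
          {z : Ap p m | ∃ l' : List (Fin m), l'.length = l.length ∧ z = lp p m l'}
  | [] => Submodule.subset_span ⟨[], rfl, rfl⟩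
  | v :: l => by
    rw [List.map_cons, List.prod_cons]
    have ih := prod_iota_mem_span p m l
    have key : ∀ z ∈ Submodule.span (Rp p m)
        {z : Ap p m | ∃ l' : List (Fin m), l'.length = l.length ∧ z = lp p m l'},
        ExteriorAlgebra.ι (Rp p m) v * z ∈ Submodule.span (Rp p m)
          {z : Ap p m | ∃ l' : List (Fin m), l'.length = (v :: l).length ∧ z = lp p m l'} := by
      intro z hz
      induction hz using Submodule.span_induction with
      | mem w hw =>
        obtain ⟨l', hl', rfl⟩ := hw
        rw [iota_eq_sum, Finset.sum_mul]
        refine Submodule.sum_mem _ fun i _ => ?_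
        rw [smul_mul_assoc, ← lp_cons]
        exact Submodule.smul_mem _ _ (Submodule.subset_span ⟨i :: l', by simp [hl'], rfl⟩)
      | zero => rw [mul_zero]; exact zero_mem _
      | add x y hx hy h1 h2 => rw [mul_add]; exact add_mem h1 h2
      | smul q x hx h1 => rw [mul_smul_comm]; exact Submodule.smul_mem _ _ h1
    exact key _ ih

lemma prod_iota_eq_zero (p m : ℕ) (l : List (Fin m → Rp p m)) (h : m < l.length) :
    (l.map (ExteriorAlgebra.ι (Rp p m))).prod = 0 := by
  have hmem := prod_iota_mem_span p m l
  have hsub : {z : Ap p m | ∃ l' : List (Fin m), l'.length = l.length ∧ z = lp p m l'}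
      ⊆ {(0 : Ap p m)} := by
    rintro _ ⟨l', hl', rfl⟩
    have : ¬l'.Nodup := by
      intro hnd
      have := hnd.length_le_card
      simp only [Fintype.card_fin] at this
      omega
    simp [lp_of_not_nodup p m this]
  have := Submodule.span_mono hsub hmem
  rw [Submodule.span_singleton_eq_bot.mpr rfl] at this
  simpa using this

lemma mul_prod_iota_eq_zero (p m : ℕ) {s : ℕ} (y : Ap p m) (hy : y ∈ Nsub p m s)
    (l : List (Fin m → Rp p m)) (h : m < s + l.length) :
    y * (l.map (ExteriorAlgebra.ι (Rp p m))).prod = 0 := by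
  induction hy using Submodule.span_induction with
  | mem w hw =>
    obtain ⟨S, hScard, rfl⟩ := hw
    have : aProd p m S * (l.map (ExteriorAlgebra.ι (Rp p m))).prod
        = (((S.sort (· ≤ ·)).map (fun i => Pi.single i (1 : Rp p m)) ++ l).map
            (ExteriorAlgebra.ι (Rp p m))).prod := by
      rw [List.map_append, List.prod_append, List.map_map]
      rfl
    rw [this, prod_iota_eq_zero]
    rw [List.length_append, List.length_map, Finset.length_sort, hScard]
    exact h
  | zero => rw [zero_mul]
  | add x y hx hy h1 h2 => rw [add_mul, h1, h2, add_zero]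
  | smul q x hx h1 => rw [smul_mul_assoc, h1, smul_zero]

/-! ### The Moore determinant is nonzero -/

/-- exponent vector of the monomial attached to a permutation -/
def dvec (p m : ℕ) (σ : Equiv.Perm (Fin m)) : Fin m →₀ ℕ :=
  Finsupp.equivFunOnFinite.symm fun i => p ^ ((σ i : ℕ))

lemma prod_moore_eq_monomial (p m : ℕ) (hp : 0 < p) (σ : Equiv.Perm (Fin m)) :
    (∏ i : Fin m, moore p m (σ i) i) = MvPolynomial.monomial (dvec p m σ) 1 := by
  rw [← MvPolynomial.prod_X_pow_eq_monomial]
  have hsupp : (dvec p m σ).support = Finset.univ := by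
    ext i
    simp only [Finsupp.mem_support_iff, Finset.mem_univ, iff_true]
    have : (dvec p m σ) i = p ^ ((σ i : ℕ)) := rfl
    rw [this]
    positivity
  rw [hsupp]
  exact Finset.prod_congr rfl fun i _ => by
    have : (dvec p m σ) i = p ^ ((σ i : ℕ)) := rfl
    rw [this]; rfl

lemma Ldet_ne_zero (p m : ℕ) [Fact p.Prime] : Ldet p m ≠ 0 := by
  intro h0
  have hp : 2 ≤ p := (Fact.out : p.Prime).two_le
  have hco : MvPolynomial.coeff (dvec p m 1) (Ldet p m) = 1 := by
    rw [Ldet, Matrix.det_apply', MvPolynomial.coeff_sum]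
    have key : ∀ σ : Equiv.Perm (Fin m),
        MvPolynomial.coeff (dvec p m 1)
          (((Equiv.Perm.sign σ : ℤ) : Rp p m) * ∏ i, moore p m (σ i) i)
          = if σ = 1 then 1 else 0 := by
      intro σ
      rw [prod_moore_eq_monomial p m (by omega) σ,
        show ((Equiv.Perm.sign σ : ℤ) : Rp p m)
            = MvPolynomial.C (((Equiv.Perm.sign σ : ℤ) : ZMod p)) from (map_intCast _ _).symm,
        MvPolynomial.C_mul_monomial, mul_one, MvPolynomial.coeff_monomial]
      by_cases hσ : σ = 1
      · subst hσ; rw [if_pos rfl, if_pos rfl]; simp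
      · rw [if_neg ?_, if_neg hσ]
        intro hEq
        apply hσ
        have hpow : ∀ i : Fin m, p ^ ((σ i : ℕ)) = p ^ ((i : ℕ)) := by
          intro i
          have := DFunLike.congr_fun hEq i
          simpa [dvec, Finsupp.coe_equivFunOnFinite_symm] using this
        ext i
        exact Nat.pow_right_injective hp (hpow i)
    rw [Finset.sum_congr rfl fun σ _ => key σ,
      Finset.sum_ite_eq' Finset.univ (1 : Equiv.Perm (Fin m)) fun _ => (1 : ZMod p)]
    simp
  rw [h0] at hco
  simp at hco

/-! ### The cofactor matrix and the Mùi invariants -/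

/-- The matrix of coefficients of the Mùi invariants. -/
def cmat (p n : ℕ) : Matrix (Fin (n + 1)) (Fin (n + 1)) (Rp p (n + 1)) :=
  Matrix.of fun s i => (-1) ^ (i : ℕ) * gam p n s i

/-- The diagonal sign matrix. -/
def dmat (p n : ℕ) : Matrix (Fin (n + 1)) (Fin (n + 1)) (Rp p (n + 1)) :=
  Matrix.diagonal fun s => (-1) ^ (s : ℕ)

/-- A one-sided "inverse" (up to the Moore determinant) of `cmat`. -/
def hmat (p n : ℕ) : Matrix (Fin (n + 1)) (Fin (n + 1)) (Rp p (n + 1)) :=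
  (moore p (n + 1))ᵀ * dmat p n

lemma adj_moore (p n : ℕ) (i s : Fin (n + 1)) :
    Matrix.adjugate (moore p (n + 1)) i s
      = (-1) ^ ((s : ℕ) + (i : ℕ)) * gam p n s i := by
  rw [Matrix.adjugate_apply, Matrix.det_succ_row _ s]
  rw [Finset.sum_eq_single i]
  · have hsub : ((moore p (n + 1)).updateRow s (Pi.single i 1)).submatrix
        s.succAbove i.succAbove = (moore p (n + 1)).submatrix s.succAbove i.succAbove := by
      funext a b
      simp only [Matrix.submatrix_apply]
      rw [Matrix.updateRow_ne (Fin.succAbove_ne s a)]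
    rw [Matrix.updateRow_self, hsub, Pi.single_eq_same, mul_one]
    rfl
  · intro j _ hj
    rw [Matrix.updateRow_self, Pi.single_eq_of_ne hj, mul_zero, zero_mul]
  · intro h
    exact absurd (Finset.mem_univ i) h

lemma cmat_eq (p n : ℕ) : cmat p n = dmat p n * (Matrix.adjugate (moore p (n + 1)))ᵀ := by
  funext s i
  rw [cmat, Matrix.of_apply, dmat, Matrix.diagonal_mul, Matrix.transpose_apply, adj_moore,
    pow_add]
  have h2 : (-1 : Rp p (n+1)) ^ (s : ℕ) * (-1) ^ (s : ℕ) = 1 := by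
    rw [← mul_pow]; simp
  rw [← mul_assoc, ← mul_assoc, h2, one_mul]

lemma hmat_mul_cmat (p n : ℕ) :
    hmat p n * cmat p n = Ldet p (n + 1) • (1 : Matrix (Fin (n + 1)) (Fin (n + 1)) _) := by
  rw [hmat, cmat_eq, Matrix.mul_assoc, ← Matrix.mul_assoc (dmat p n), dmat,
    Matrix.diagonal_mul_diagonal]
  have : (fun s : Fin (n + 1) => (-1 : Rp p (n + 1)) ^ (s : ℕ) * (-1) ^ (s : ℕ))
      = fun _ => 1 := by
    funext s; rw [← mul_pow]; simp
  rw [this, Matrix.diagonal_one, Matrix.one_mul, ← Matrix.transpose_mul,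
    Matrix.adjugate_mul, Ldet]
  rw [Matrix.transpose_smul, Matrix.transpose_one]

/-- The linear map whose exterior extension sends `a_s` to `M_{n,s}`. -/
def flin (p n : ℕ) : (Fin (n + 1) → Rp p (n + 1)) →ₗ[Rp p (n + 1)] Fin (n + 1) → Rp p (n + 1) :=
  Matrix.toLin' (cmat p n)ᵀ

/-- The linear map undoing `flin` up to the Moore determinant. -/
def glin (p n : ℕ) : (Fin (n + 1) → Rp p (n + 1)) →ₗ[Rp p (n + 1)] Fin (n + 1) → Rp p (n + 1) :=
  Matrix.toLin' (hmat p n)ᵀ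

lemma flin_comp_glin (p n : ℕ) :
    (flin p n).comp (glin p n) = Ldet p (n + 1) • LinearMap.id := by
  rw [flin, glin, ← Matrix.toLin'_mul, ← Matrix.transpose_mul, hmat_mul_cmat,
    Matrix.transpose_smul, Matrix.transpose_one, _root_.map_smul, Matrix.toLin'_one]

lemma Mui_eq_map (p n : ℕ) (s : Fin (n + 1)) :
    Mui p n s = ExteriorAlgebra.map (flin p n) (aa p (n + 1) s) := by
  rw [aa, ExteriorAlgebra.map_apply_ι]
  have hv : flin p n (Pi.single s 1) = fun i => cmat p n s i := by
    rw [flin, Matrix.toLin'_apply, Matrix.mulVec_single]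
    funext i
    simp
  rw [hv, iota_eq_sum]
  rw [Mui]
  exact Finset.sum_congr rfl fun i _ => by rw [cmat]; rfl

lemma prodMui_eq_map (p n : ℕ) (S : Finset (Fin (n + 1))) :
    ((S.sort (· ≤ ·)).map (Mui p n)).prod
      = ExteriorAlgebra.map (flin p n) (aProd p (n + 1) S) := by
  rw [aProd, map_list_prod, List.map_map]
  refine congrArg List.prod (List.map_congr_left fun s _ => ?_)
  exact Mui_eq_map p n s

/-- mapping by `q • id` on a product of generators scales by `q ^ length`. -/
lemma map_smul_id_lp (p m : ℕ) (q : Rp p m) :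
    ∀ l : List (Fin m), ExteriorAlgebra.map (q • LinearMap.id) (lp p m l)
      = q ^ l.length • lp p m l
  | [] => by simp [lp_nil]
  | i :: l => by
    rw [lp_cons, _root_.map_mul, map_smul_id_lp p m q l]
    have : ExteriorAlgebra.map (q • LinearMap.id) (aa p m i)
        = q • aa p m i := by
      rw [aa, ExteriorAlgebra.map_apply_ι, LinearMap.smul_apply, LinearMap.id_apply, _root_.map_smul]
    rw [this, smul_mul_assoc, mul_smul_comm, smul_smul, List.length_cons,
      pow_succ, mul_comm (q ^ l.length) q]

lemma map_aProd (p m : ℕ) (g : (Fin m → Rp p m) →ₗ[Rp p m] Fin m → Rp p m)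
    (T : Finset (Fin m)) :
    ExteriorAlgebra.map g (aProd p m T)
      = (((T.sort (· ≤ ·)).map fun i => g (Pi.single i 1)).map
          (ExteriorAlgebra.ι (Rp p m))).prod := by
  rw [aProd, map_list_prod, List.map_map, List.map_map]
  refine congrArg List.prod (List.map_congr_left fun i _ => ?_)
  exact ExteriorAlgebra.map_apply_ι g (Pi.single i 1)

end Anni

/-- Fix `1 ≤ r ≤ n`. Then `y·M_{n,S} = 0` for every subset `S` of size `r`
if and only if `y ∈ ⊕_{s=n-r+1}^n N_s` (the rank here is `n+1`). -/
theorem joint_annihilator_MuiSet (p n : ℕ) [Fact p.Prime] (hodd : Odd p)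
    (MS : Finset (Fin (n + 1)) → Ap p (n + 1))
    (hMS : ∀ S : Finset (Fin (n + 1)),
      (Ldet p (n + 1)) ^ S.card • MS S =
        (Ldet p (n + 1)) • ((S.sort (· ≤ ·)).map (Mui p n)).prod)
    (r : ℕ) (hr1 : 1 ≤ r) (hr2 : r ≤ n + 1) (y : Ap p (n + 1)) :
    (∀ S : Finset (Fin (n + 1)), S.card = r → y * MS S = 0) ↔
      y ∈ ⨆ s ∈ Finset.Icc (n + 1 - r + 1) (n + 1), Nsub p (n + 1) s := by
  classical
  have hL : Ldet p (n + 1) ≠ 0 := Anni.Ldet_ne_zero p (n + 1)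
  constructor
  · intro hann
    -- Step A: `y` kills the products of Mùi invariants
    have hA : ∀ S : Finset (Fin (n + 1)), S.card = r →
        y * ExteriorAlgebra.map (Anni.flin p n) (aProd p (n + 1) S) = 0 := by
      intro S hS
      have h2 : Ldet p (n + 1) • (y * ((S.sort (· ≤ ·)).map (Mui p n)).prod) = 0 := by
        calc Ldet p (n + 1) • (y * ((S.sort (· ≤ ·)).map (Mui p n)).prod)
            = y * (Ldet p (n + 1) • ((S.sort (· ≤ ·)).map (Mui p n)).prod) :=
              (mul_smul_comm _ _ _).symm
          _ = y * (Ldet p (n + 1) ^ S.card • MS S) := by rw [hMS S]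
          _ = Ldet p (n + 1) ^ S.card • (y * MS S) := mul_smul_comm _ _ _
          _ = 0 := by rw [hann S hS, smul_zero]
      have h3 := Anni.smul_cancel p (n + 1) hL h2
      rw [← Anni.prodMui_eq_map p n S]
      exact h3
    -- Step B: `y` kills all `aProd T` with `T.card = r`
    have hB : ∀ T : Finset (Fin (n + 1)), T.card = r → y * aProd p (n + 1) T = 0 := by
      intro T hT
      set l : List (Fin (n + 1) → Rp p (n + 1)) :=
        (T.sort (· ≤ ·)).map (fun i => Anni.glin p n (Pi.single i 1)) with hl
      have hlenl : l.length = r := by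
        rw [hl, List.length_map, Finset.length_sort, hT]
      have hscale : ExteriorAlgebra.map ((Anni.flin p n).comp (Anni.glin p n))
          (aProd p (n + 1) T) = Ldet p (n + 1) ^ r • aProd p (n + 1) T := by
        rw [Anni.flin_comp_glin, Anni.aProd_eq_lp, Anni.map_smul_id_lp,
          Finset.length_sort, hT, ← Anni.aProd_eq_lp]
      have hcomp : ExteriorAlgebra.map ((Anni.flin p n).comp (Anni.glin p n))
          (aProd p (n + 1) T) = ExteriorAlgebra.map (Anni.flin p n)
            (ExteriorAlgebra.map (Anni.glin p n) (aProd p (n + 1) T)) := by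
        rw [← ExteriorAlgebra.map_comp_map]
        rfl
      have hgl : ExteriorAlgebra.map (Anni.glin p n) (aProd p (n + 1) T)
          = (l.map (ExteriorAlgebra.ι (Rp p (n + 1)))).prod :=
        Anni.map_aProd p (n + 1) (Anni.glin p n) T
      have hker : ∀ z ∈ Submodule.span (Rp p (n + 1))
          {z : Ap p (n + 1) | ∃ l' : List (Fin (n + 1)),
            l'.length = l.length ∧ z = Anni.lp p (n + 1) l'},
          y * ExteriorAlgebra.map (Anni.flin p n) z = 0 := by
        intro z hz
        induction hz using Submodule.span_induction with
        | mem w hw =>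
          obtain ⟨l', hlen, rfl⟩ := hw
          have hlen' : l'.length = r := by rw [hlen, hlenl]
          by_cases hnd : l'.Nodup
          · have hcard : l'.toFinset.card = r := by
              rw [List.toFinset_card_of_nodup hnd, hlen']
            rcases Anni.lp_of_nodup p (n + 1) hnd with h' | h' <;> rw [h']
            · exact hA _ hcard
            · rw [map_neg, mul_neg, hA _ hcard, neg_zero]
          · rw [Anni.lp_of_not_nodup p (n + 1) hnd, map_zero, mul_zero]
        | zero => rw [map_zero, mul_zero]
        | add a b _ _ h1 h2 => rw [map_add, mul_add, h1, h2, add_zero]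
        | smul q a _ h1 => rw [_root_.map_smul, mul_smul_comm, h1, smul_zero]
      have h0 : Ldet p (n + 1) ^ r • (y * aProd p (n + 1) T) = 0 := by
        rw [← mul_smul_comm, ← hscale, hcomp, hgl]
        exact hker _ (Anni.prod_iota_mem_span p (n + 1) l)
      exact Anni.smul_cancel p (n + 1) (pow_ne_zero r hL) h0
    -- Step C: conclude membership
    rw [Anni.mem_sup_iff p (n + 1) (n + 1 - r + 1) (n + 1) y]
    intro U hU
    have h1 : U.card ≤ n + 1 := by
      simpa using Finset.card_le_univ U
    simp only [Finset.mem_Icc, not_and, not_le] at hU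
    have hcardU : U.card + r ≤ n + 1 := by omega
    have hcompl : r ≤ Uᶜ.card := by
      rw [Finset.card_compl]
      simp only [Fintype.card_fin]
      omega
    obtain ⟨T, hTsub, hTcard⟩ := Finset.exists_subset_card_eq hcompl
    have hdisj : Disjoint U T := by
      rw [Finset.disjoint_left]
      intro a haU haT
      exact (Finset.mem_compl.mp (hTsub haT)) haU
    obtain ⟨e, he, heq⟩ := Anni.cS_mul_aProd p (n + 1) hdisj
    have hthis := heq y
    rw [hB T hTcard, map_zero] at hthis
    rcases he with rfl | rfl
    · rw [one_mul] at hthis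
      exact hthis.symm
    · rw [neg_one_mul] at hthis
      exact neg_eq_zero.mp hthis.symm
  · intro hy S hScard
    have hzero : y * ((S.sort (· ≤ ·)).map (Mui p n)).prod = 0 := by
      rw [Anni.prodMui_eq_map, Anni.map_aProd]
      set l : List (Fin (n + 1) → Rp p (n + 1)) :=
        (S.sort (· ≤ ·)).map (fun i => Anni.flin p n (Pi.single i 1)) with hl
      have hlenl : l.length = r := by
        rw [hl, List.length_map, Finset.length_sort, hScard]
      have hsup : (⨆ s ∈ Finset.Icc (n + 1 - r + 1) (n + 1), Nsub p (n + 1) s) ≤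
          LinearMap.ker (LinearMap.mulRight (Rp p (n + 1))
            ((l.map (ExteriorAlgebra.ι (Rp p (n + 1)))).prod)) := by
        refine iSup₂_le fun s hs => ?_
        intro z hz
        rw [LinearMap.mem_ker, LinearMap.mulRight_apply]
        refine Anni.mul_prod_iota_eq_zero p (n + 1) z hz l ?_
        rw [hlenl]
        simp only [Finset.mem_Icc] at hs
        omega
      have := hsup hy
      rw [LinearMap.mem_ker, LinearMap.mulRight_apply] at this
      exact this
    have h0 : Ldet p (n + 1) ^ r • (y * MS S) = 0 := by
      calc Ldet p (n + 1) ^ r • (y * MS S)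
          = y * (Ldet p (n + 1) ^ S.card • MS S) := by rw [hScard, mul_smul_comm]
        _ = y * (Ldet p (n + 1) • ((S.sort (· ≤ ·)).map (Mui p n)).prod) := by rw [hMS S]
        _ = Ldet p (n + 1) • (y * ((S.sort (· ≤ ·)).map (Mui p n)).prod) :=
            mul_smul_comm _ _ _
        _ = 0 := by rw [hzero, smul_zero]
    exact Anni.smul_cancel p (n + 1) (pow_ne_zero r hL) h0
end
end

section
/- The Mùi invariant M_{n,{1,…,n}} equals c·a_1 a_2 ⋯ a_n for some nonzero scalar c ∈ F_p, and M_{n,S} ≠ 0 for every subset S ⊆ {1,…,n}. -/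
set_option maxHeartbeats 1000000
set_option synthInstance.maxHeartbeats 400000

open scoped BigOperators

noncomputable section

namespace MuiAux
open ExteriorAlgebra

variable {R : Type*} [CommRing R] {m : ℕ}

/-- product of `ι (f s)` over a list of indices -/
def listI (f : Fin m → (Fin m → R)) (l : List (Fin m)) : ExteriorAlgebra R (Fin m → R) :=
  (l.map fun s => ExteriorAlgebra.ι R (f s)).prod

lemma listI_eq (f : Fin m → (Fin m → R)) (l : List (Fin m)) :
    listI f l = ιMulti R l.length (fun j => f (l.get j)) := by
  rw [ιMulti_apply]
  conv_lhs => rw [listI, ← List.ofFn_get l, List.map_ofFn]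
  rfl

lemma listI_append (f : Fin m → (Fin m → R)) (l₁ l₂ : List (Fin m)) :
    listI f (l₁ ++ l₂) = listI f l₁ * listI f l₂ := by
  simp [listI, List.map_append, List.prod_append]

lemma ιMulti_cast {k k' : ℕ} (h : k = k') (v : Fin k' → (Fin m → R)) :
    ιMulti R k' v = ιMulti R k (v ∘ Fin.cast h) := by
  subst h; rfl

lemma ιMulti_eq_det_smul (v : Fin m → (Fin m → R)) :
    ιMulti R m v = ((Pi.basisFun R (Fin m)).det v) • ιMulti R m ⇑(Pi.basisFun R (Fin m)) := by
  classical
  have h : (ιMulti R m : (Fin m → R) [⋀^Fin m]→ₗ[R] _) =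
      (LinearMap.toSpanSingleton R _
          (ιMulti R m ⇑(Pi.basisFun R (Fin m)))).compAlternatingMap
        (Pi.basisFun R (Fin m)).det := by
    refine Module.Basis.ext_alternating (Pi.basisFun R (Fin m)) fun g hg => ?_
    have hbij := (Finite.injective_iff_bijective).mp hg
    set σ := Equiv.ofBijective g hbij with hσ
    have hgσ : (fun i => (Pi.basisFun R (Fin m)) (g i)) = ⇑(Pi.basisFun R (Fin m)) ∘ σ := rfl
    rw [hgσ, AlternatingMap.map_perm, LinearMap.compAlternatingMap_apply,
      AlternatingMap.map_perm, Module.Basis.det_self, LinearMap.toSpanSingleton_apply,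
      Units.smul_def, Units.smul_def]
    rw [Int.smul_one_eq_cast, Int.cast_smul_eq_zsmul]
  conv_lhs => rw [h]
  rfl


/-- family of alternating maps extracting the coefficient of the monomial indexed by `T` -/
def coeffFam (T : Finset (Fin m)) : ∀ i : ℕ, ((Fin m → R) [⋀^Fin i]→ₗ[R] R) := fun i =>
  if h : i = T.card then
    ((Pi.basisFun R (Fin i)).det).compLinearMap
      (LinearMap.funLeft R R fun a : Fin i => (T.orderEmbOfFin h.symm a : Fin m))
  else 0

def coeffF (T : Finset (Fin m)) : ExteriorAlgebra R (Fin m → R) →ₗ[R] R :=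
  liftAlternating (coeffFam T)

lemma coeffF_listI_single [Nontrivial R] (S T : Finset (Fin m)) :
    coeffF T ((listI (fun i => Pi.single i (1:R)) (S.sort (· ≤ ·)))) =
      if S = T then 1 else 0 := by
  classical
  rw [listI_eq, coeffF, liftAlternating_apply_ιMulti, coeffFam]
  by_cases h : (S.sort (· ≤ ·)).length = T.card
  · rw [dif_pos h, AlternatingMap.compLinearMap_apply, Module.Basis.det_apply]
    have hmat : ∀ a b, (Pi.basisFun R (Fin (S.sort (· ≤ ·)).length)).toMatrix
        (fun j => LinearMap.funLeft R R (fun a : Fin (S.sort (· ≤ ·)).length =>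
          (T.orderEmbOfFin h.symm a : Fin m)) (Pi.single ((S.sort (· ≤ ·)).get j) 1)) a b
        = if T.orderEmbOfFin h.symm a = (S.sort (· ≤ ·)).get b then 1 else 0 := by
      intro a b
      rw [Module.Basis.toMatrix_apply, Pi.basisFun_repr, LinearMap.funLeft_apply, Pi.single_apply]
    by_cases hST : S = T
    · subst hST
      rw [if_pos rfl]
      have : ((Pi.basisFun R (Fin (S.sort (· ≤ ·)).length)).toMatrix
          (fun j => LinearMap.funLeft R R (fun a : Fin (S.sort (· ≤ ·)).length =>
            (S.orderEmbOfFin h.symm a : Fin m)) (Pi.single ((S.sort (· ≤ ·)).get j) 1))) = 1 := by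
        ext a b
        rw [hmat a b, Matrix.one_apply]
        have hiff : S.orderEmbOfFin h.symm a = (S.sort (· ≤ ·)).get b ↔ a = b := by
          rw [Finset.orderEmbOfFin_apply, List.get_eq_getElem]
          exact ⟨fun hh => (List.nodup_iff_injective_getElem.mp (S.sort_nodup _)) hh,
            fun hh => by subst hh; rfl⟩
        simp only [hiff]
      rw [this, Matrix.det_one]
    · rw [if_neg hST]
      have hcards : S.card = T.card := by rw [← Finset.length_sort (· ≤ ·)]; exact h
      have hTS : ¬ T ⊆ S := fun hsub => hST (Finset.eq_of_subset_of_card_le hsub (le_of_eq hcards)).symm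
      obtain ⟨t, htT, htS⟩ := Finset.not_subset.mp hTS
      have : t ∈ Set.range (T.orderEmbOfFin h.symm) := by
        rw [Finset.range_orderEmbOfFin]; exact htT
      obtain ⟨a0, ha0⟩ := this
      apply Matrix.det_eq_zero_of_row_eq_zero a0
      intro b
      rw [hmat a0 b, if_neg]
      intro hab
      apply htS
      rw [← ha0, hab] at htT ⊢
      have : (S.sort (· ≤ ·)).get b ∈ S.sort (· ≤ ·) := by simpa using (S.sort (· ≤ ·)).get_mem b b.2
      exact (Finset.mem_sort _).mp this
  · rw [dif_neg h, AlternatingMap.zero_apply, if_neg]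
    intro hST; subst hST
    exact h (Finset.length_sort _)

/-- set of sorted monomials -/
def monSet : Set (ExteriorAlgebra R (Fin m → R)) :=
  {x | ∃ S : Finset (Fin m), x = listI (fun i => Pi.single i (1:R)) (S.sort (· ≤ ·))}

lemma listI_single_mem_span [Nontrivial R] (l : List (Fin m)) :
    listI (fun i => Pi.single i (1:R)) l ∈ Submodule.span R (monSet (R := R) (m := m)) := by
  classical
  rw [listI_eq]
  by_cases hinj : Function.Injective l.get
  · have hnd : l.Nodup := List.nodup_iff_injective_get.mpr hinj
    set S : Finset (Fin m) := l.toFinset with hS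
    have hcard : S.card = l.length := List.toFinset_card_of_nodup hnd
    have hlen : l.length = (S.sort (· ≤ ·)).length := by
      rw [Finset.length_sort, hcard]
    set u : Fin l.length → Fin m := fun j => (S.sort (· ≤ ·)).get (Fin.cast hlen j) with hu
    have hu_inj : Function.Injective u := by
      intro a b hab
      have := List.nodup_iff_injective_get.mp (S.sort_nodup _) hab
      exact Fin.ext (by simpa using congrArg Fin.val this)
    have hranges : Set.range l.get = Set.range u := by
      ext x
      simp only [Set.mem_range]
      constructor
      · rintro ⟨j, rfl⟩
        have hx : l.get j ∈ S.sort (· ≤ ·) := by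
          rw [Finset.mem_sort]
          exact List.mem_toFinset.mpr (by simpa using l.get_mem j j.2)
        obtain ⟨k, hk⟩ := List.mem_iff_get.mp hx
        exact ⟨Fin.cast hlen.symm k, by simpa [hu] using hk⟩
      · rintro ⟨j, rfl⟩
        have hx : u j ∈ l := by
          have : u j ∈ S.sort (· ≤ ·) := by
            simpa [hu] using (S.sort (· ≤ ·)).get_mem (Fin.cast hlen j) (Fin.cast hlen j).2
          rw [Finset.mem_sort] at this
          simpa [hS, List.mem_toFinset] using this
        obtain ⟨k, hk⟩ := List.mem_iff_get.mp hx
        exact ⟨k, hk⟩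
    set σ : Fin l.length ≃ Fin l.length :=
      (Equiv.ofInjective l.get hinj).trans
        ((Equiv.setCongr hranges).trans (Equiv.ofInjective u hu_inj).symm) with hσdef
    have hσ : ∀ j, u (σ j) = l.get j := by
      intro j
      simp only [hσdef, Equiv.trans_apply, Equiv.setCongr_apply]
      exact Equiv.apply_ofInjective_symm hu_inj _
    have hfun : (fun j => Pi.single (l.get j) (1:R)) = (fun j => Pi.single (u j) (1:R)) ∘ σ := by
      funext j
      simp only [Function.comp_apply, hσ j]
    rw [hfun, AlternatingMap.map_perm]
    have hmem : ιMulti R l.length (fun j => Pi.single (u j) (1:R)) ∈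
        Submodule.span R (monSet (R := R) (m := m)) := by
      have : ιMulti R l.length (fun j => Pi.single (u j) (1:R)) =
          listI (fun i => Pi.single i (1:R)) (S.sort (· ≤ ·)) := by
        rw [listI_eq, ιMulti_cast hlen]
        rfl
      rw [this]
      exact Submodule.subset_span ⟨S, rfl⟩
    rcases Int.units_eq_one_or (Equiv.Perm.sign σ) with hs | hs <;> rw [hs]
    · simpa using hmem
    · rw [Units.smul_def]
      simpa using Submodule.neg_mem _ hmem
  · have : ¬ Function.Injective (fun j => (Pi.single (l.get j) (1:R) : Fin m → R)) := by
      intro hcontra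
      apply hinj
      intro a b hab
      apply hcontra
      simp only [hab]
    rw [AlternatingMap.map_eq_zero_of_not_injective _ _ this]
    exact Submodule.zero_mem _

lemma span_monSet_eq_top [Nontrivial R] :
    Submodule.span R (monSet (R := R) (m := m)) = ⊤ := by
  classical
  rw [eq_top_iff]
  rintro x -
  induction x using ExteriorAlgebra.induction with
  | algebraMap r =>
    rw [Algebra.algebraMap_eq_smul_one]
    refine Submodule.smul_mem _ _ (Submodule.subset_span ⟨∅, ?_⟩)
    simp [listI]
  | ι v =>
    have hv : v = ∑ i, v i • (Pi.single i (1:R) : Fin m → R) := by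
      ext j
      simp [Finset.sum_apply, Pi.single_apply]
    rw [hv, map_sum]
    refine Submodule.sum_mem _ fun i _ => ?_
    rw [map_smul]
    refine Submodule.smul_mem _ _ ?_
    have : ExteriorAlgebra.ι R ((Pi.single i (1:R) : Fin m → R)) =
        listI (fun i => Pi.single i (1:R)) [i] := by simp [listI]
    rw [this]
    exact listI_single_mem_span [i]
  | mul x y hx hy =>
    refine Submodule.span_induction₂
      (p := fun a b _ _ => a * b ∈ Submodule.span R (monSet (R := R) (m := m)))
      ?_ ?_ ?_ ?_ ?_ ?_ ?_ hx hy
    · rintro a b ⟨S, rfl⟩ ⟨T, rfl⟩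
      rw [← listI_append]
      exact listI_single_mem_span _
    · intro y _; rw [zero_mul]; exact Submodule.zero_mem _
    · intro x _; rw [mul_zero]; exact Submodule.zero_mem _
    · intro a b c _ _ _ h1 h2; rw [add_mul]; exact Submodule.add_mem _ h1 h2
    · intro a b c _ _ _ h1 h2; rw [mul_add]; exact Submodule.add_mem _ h1 h2
    · intro r a b _ _ h1; rw [smul_mul_assoc]; exact Submodule.smul_mem _ _ h1
    · intro r a b _ _ h1; rw [mul_smul_comm]; exact Submodule.smul_mem _ _ h1
  | add x y hx hy => exact Submodule.add_mem _ hx hy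

def recon : ExteriorAlgebra R (Fin m → R) →ₗ[R] ExteriorAlgebra R (Fin m → R) :=
  ∑ T : Finset (Fin m),
    (LinearMap.toSpanSingleton R _ (listI (fun i => Pi.single i (1:R)) (T.sort (· ≤ ·)))).comp
      (coeffF T)

lemma recon_eq_id [Nontrivial R] :
    (recon : ExteriorAlgebra R (Fin m → R) →ₗ[R] _) = LinearMap.id := by
  classical
  refine LinearMap.ext_on (span_monSet_eq_top (R := R) (m := m)) ?_
  rintro x ⟨S, rfl⟩
  rw [recon, LinearMap.sum_apply, LinearMap.id_apply]
  have : ∀ T : Finset (Fin m),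
      ((LinearMap.toSpanSingleton R _
          (listI (fun i => Pi.single i (1:R)) (T.sort (· ≤ ·)))).comp (coeffF T))
        (listI (fun i => Pi.single i (1:R)) (S.sort (· ≤ ·)))
      = if S = T then listI (fun i => Pi.single i (1:R)) (T.sort (· ≤ ·)) else 0 := by
    intro T
    rw [LinearMap.comp_apply, coeffF_listI_single, LinearMap.toSpanSingleton_apply]
    split <;> simp
  rw [Finset.sum_congr rfl fun T _ => this T]
  simp

lemma torsionfree [Nontrivial R] [NoZeroDivisors R] {r : R}
    (hr : r ≠ 0) {x : ExteriorAlgebra R (Fin m → R)} (h : r • x = 0) : x = 0 := by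
  have hx : ∀ T : Finset (Fin m), coeffF T x = 0 := by
    intro T
    have h2 := congrArg (coeffF T) h
    rw [map_smul, map_zero, smul_eq_mul] at h2
    exact (mul_eq_zero.mp h2).resolve_left hr
  have : x = recon x := by rw [recon_eq_id (R := R)]; rfl
  rw [this, recon, LinearMap.sum_apply]
  refine Finset.sum_eq_zero fun T _ => ?_
  rw [LinearMap.comp_apply, hx T, map_zero]

lemma top_ne_zero [Nontrivial R] :
    listI (fun i => Pi.single i (1:R)) ((Finset.univ : Finset (Fin m)).sort (· ≤ ·)) ≠ 0 := by
  intro h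
  have := coeffF_listI_single (R := R) (Finset.univ : Finset (Fin m)) Finset.univ
  rw [h, map_zero, if_pos rfl] at this
  exact zero_ne_one this

lemma listI_univ_sort (f : Fin m → (Fin m → R)) :
    listI f ((Finset.univ : Finset (Fin m)).sort (· ≤ ·)) = ιMulti R m f := by
  rw [Fin.sort_univ, listI_eq, ιMulti_cast (List.length_finRange (n := m)) f]
  refine congrArg _ (funext fun j => ?_)
  simp only [Function.comp_apply]
  congr 1
  rcases j with ⟨j, hj⟩
  rw [List.get_finRange]

lemma listI_full (f : Fin m → (Fin m → R)) (l : List (Fin m)) (hlen : l.length = m)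
    (hnd : l.Nodup) :
    ∃ σ : Equiv.Perm (Fin m),
      listI f l = Equiv.Perm.sign σ •
        (((Pi.basisFun R (Fin m)).det f) • ιMulti R m ⇑(Pi.basisFun R (Fin m))) := by
  classical
  rw [listI_eq]
  set ν : Fin m → Fin m := fun j => l.get (Fin.cast hlen.symm j) with hν
  have hinj : Function.Injective ν := by
    intro a b hab
    have := (List.nodup_iff_injective_get.mp hnd) hab
    exact Fin.ext (by simpa using congrArg Fin.val this)
  have hbij := Finite.injective_iff_bijective.mp hinj
  refine ⟨Equiv.ofBijective ν hbij, ?_⟩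
  have h1 : ιMulti R l.length (fun j => f (l.get j)) = ιMulti R m (f ∘ ν) := by
    rw [ιMulti_cast hlen (f ∘ ν)]
    refine congrArg _ (funext fun j => ?_)
    simp only [Function.comp_apply, hν]
    congr 1
  rw [h1]
  have h2 : f ∘ ν = f ∘ (Equiv.ofBijective ν hbij) := rfl
  rw [h2, AlternatingMap.map_perm, ιMulti_eq_det_smul]

end MuiAux

open MuiAux ExteriorAlgebra in
lemma prod_monomial_one {p : ℕ} {m : ℕ} (s : Finset (Fin m)) (f : Fin m → (Fin m →₀ ℕ)) :
    ∏ i ∈ s, (MvPolynomial.monomial (f i) (1 : ZMod p)) =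
      MvPolynomial.monomial (∑ i ∈ s, f i) (1 : ZMod p) := by
  classical
  induction s using Finset.induction with
  | empty => simp
  | insert _ _ hx ih =>
    rw [Finset.prod_insert hx, Finset.sum_insert hx, ih, MvPolynomial.monomial_mul, one_mul]

lemma moore_det_ne_zero (p m : ℕ) [Fact p.Prime] : Ldet p m ≠ 0 := by
  classical
  have hp : 2 ≤ p := (Fact.out : p.Prime).two_le
  set d0 : Fin m →₀ ℕ := ∑ i : Fin m, Finsupp.single i (p ^ (i : ℕ)) with hd0
  have key : ∀ σ : Equiv.Perm (Fin m),
      (∏ i : Fin m, moore p m (σ i) i) =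
        MvPolynomial.monomial (∑ i : Fin m, Finsupp.single i (p ^ ((σ i : Fin m) : ℕ)))
          (1 : ZMod p) := by
    intro σ
    rw [← prod_monomial_one]
    refine Finset.prod_congr rfl fun i _ => ?_
    rw [moore, Matrix.of_apply, MvPolynomial.X_pow_eq_monomial]
  have hcoeff : MvPolynomial.coeff d0 (Ldet p m) = 1 := by
    rw [Ldet, Matrix.det_apply, MvPolynomial.coeff_sum]
    have hterm : ∀ σ : Equiv.Perm (Fin m),
        MvPolynomial.coeff d0 (Equiv.Perm.sign σ • ∏ i : Fin m, moore p m (σ i) i) =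
          if σ = 1 then 1 else 0 := by
      intro σ
      rw [Units.smul_def, MvPolynomial.coeff_smul, key σ, MvPolynomial.coeff_monomial]
      by_cases hσ : σ = 1
      · subst hσ
        rw [if_pos, if_pos rfl]
        · simp
        · simp [hd0]
      · rw [if_neg, if_neg hσ]
        · simp
        · intro hcon
          apply hσ
          ext i
          have h1 := congrFun (congrArg (fun g : Fin m →₀ ℕ => (g : Fin m → ℕ)) (hcon.trans hd0.symm ▸ hcon)) i
          have h2 : (∑ j : Fin m, Finsupp.single j (p ^ ((σ j : Fin m) : ℕ))) i =
              p ^ ((σ i : Fin m) : ℕ) := by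
            rw [Finsupp.finset_sum_apply]
            rw [Finset.sum_eq_single i (fun j _ hj => Finsupp.single_eq_of_ne' hj) (by simp)]
            simp
          have h3 : d0 i = p ^ (i : ℕ) := by
            rw [hd0, Finsupp.finset_sum_apply]
            rw [Finset.sum_eq_single i (fun j _ hj => Finsupp.single_eq_of_ne' hj) (by simp)]
            simp
          have h4 : p ^ ((σ i : Fin m) : ℕ) = p ^ (i : ℕ) := by
            rw [← h2, ← h3, hcon]
          have := Nat.pow_right_injective hp h4
          simpa using this
    rw [Finset.sum_congr rfl fun σ _ => hterm σ]
    simp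
  intro h
  rw [h, MvPolynomial.coeff_zero] at hcoeff
  exact zero_ne_one hcoeff

/-- the coefficient vector of the Mùi element `M_{n,s}` -/
def wvec (p n : ℕ) (s : Fin (n + 1)) : Fin (n + 1) → Rp p (n + 1) :=
  fun i => (-1) ^ (i : ℕ) * gam p n s i

open MuiAux ExteriorAlgebra in
lemma Mui_eq_ι (p n : ℕ) (s : Fin (n + 1)) :
    Mui p n s = ExteriorAlgebra.ι (Rp p (n + 1)) (wvec p n s) := by
  have hw : wvec p n s = ∑ i : Fin (n + 1), ((-1) ^ (i.val) * gam p n s i) •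
      (Pi.single i (1 : Rp p (n + 1)) : Fin (n + 1) → Rp p (n + 1)) := by
    funext j
    rw [Finset.sum_apply, Finset.sum_eq_single j
      (fun i _ hij => by rw [Pi.smul_apply, Pi.single_eq_of_ne hij.symm, smul_zero])
      (by simp)]
    rw [Pi.smul_apply, Pi.single_eq_same, smul_eq_mul, mul_one]
    rfl
  rw [hw, map_sum, Mui]
  refine Finset.sum_congr rfl fun i _ => ?_
  rw [map_smul]
  rfl

open MuiAux ExteriorAlgebra in
lemma map_Mui_prod (p n : ℕ) (l : List (Fin (n + 1))) :
    (l.map (Mui p n)).prod = listI (wvec p n) l := by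
  rw [listI]
  congr 1
  exact List.map_congr_left fun s _ => Mui_eq_ι p n s

open MuiAux ExteriorAlgebra in
lemma aProd_eq_listI (p n : ℕ) (S : Finset (Fin (n + 1))) :
    aProd p (n + 1) S = listI (fun i => (Pi.single i (1 : Rp p (n + 1)))) (S.sort (· ≤ ·)) := rfl

open MuiAux ExteriorAlgebra in
lemma det_wvec (p n : ℕ) [Fact p.Prime] :
    (Pi.basisFun (Rp p (n + 1)) (Fin (n + 1))).det (wvec p n) =
      ((-1 : Rp p (n + 1)) ^ (∑ s : Fin (n + 1), (s : ℕ))) * Ldet p (n + 1) ^ n := by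
  rw [Module.Basis.det_apply]
  have h1 : (Pi.basisFun (Rp p (n + 1)) (Fin (n + 1))).toMatrix (wvec p n) =
      (Matrix.of (fun s i : Fin (n + 1) =>
        (-1 : Rp p (n + 1)) ^ (s : ℕ) * (moore p (n + 1)).adjugate.transpose s i)).transpose := by
    refine Matrix.ext fun i s => ?_
    rw [Module.Basis.toMatrix_apply, Pi.basisFun_repr, Matrix.transpose_apply, Matrix.of_apply,
      Matrix.transpose_apply, Matrix.adjugate_fin_succ_eq_det_submatrix]
    show wvec p n s i = _
    rw [wvec]
    have : ((s : ℕ) + ((s : ℕ) + (i : ℕ))) = 2 * (s : ℕ) + (i : ℕ) := by ring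
    rw [← mul_assoc, ← pow_add, this, pow_add, pow_mul]
    norm_num
    rfl
  rw [h1, Matrix.det_transpose, Matrix.det_mul_column, Matrix.det_transpose,
    Matrix.det_adjugate]
  congr 1
  · rw [Finset.prod_pow_eq_pow_sum]
  · rw [← Ldet]
    congr 1
    simp

/-- `M_{n,{1,…,n}}` is a nonzero scalar multiple of `a_1 a_2 ⋯ a_n`, and
`M_{n,S} ≠ 0` for every subset `S` (the rank is `n+1`). -/
theorem MuiSet_top_and_ne_zero (p n : ℕ) [Fact p.Prime] (hodd : Odd p)
    (MS : Finset (Fin (n + 1)) → Ap p (n + 1))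
    (hMS : ∀ S : Finset (Fin (n + 1)),
      (Ldet p (n + 1)) ^ S.card • MS S =
        (Ldet p (n + 1)) • ((S.sort (· ≤ ·)).map (Mui p n)).prod) :
    (∃ c : ZMod p, c ≠ 0 ∧
      MS Finset.univ = (MvPolynomial.C c : Rp p (n + 1)) • aProd p (n + 1) Finset.univ) ∧
    ∀ S : Finset (Fin (n + 1)), MS S ≠ 0 := by
  classical
  have hL : Ldet p (n + 1) ≠ 0 := moore_det_ne_zero p (n + 1)
  set K := ∑ s : Fin (n + 1), (s : ℕ) with hK
  set Top := ExteriorAlgebra.ιMulti (Rp p (n + 1)) (n + 1)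
      ⇑(Pi.basisFun (Rp p (n + 1)) (Fin (n + 1))) with hTop
  have hbasis_single : ⇑(Pi.basisFun (Rp p (n + 1)) (Fin (n + 1))) =
      fun i => (Pi.single i (1 : Rp p (n + 1)) : Fin (n + 1) → Rp p (n + 1)) := by
    funext i
    exact Pi.basisFun_apply _ _ i
  have hTop_ne : Top ≠ 0 := by
    have h0 := MuiAux.top_ne_zero (R := Rp p (n + 1)) (m := n + 1)
    rw [MuiAux.listI_univ_sort] at h0
    rw [hTop, hbasis_single]
    exact h0
  have hTF : ∀ (r : Rp p (n + 1)) (x : Ap p (n + 1)), r ≠ 0 → r • x = 0 → x = 0 :=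
    fun r x hr h => MuiAux.torsionfree hr h
  have hdet : (Pi.basisFun (Rp p (n + 1)) (Fin (n + 1))).det (wvec p n) =
      (-1 : Rp p (n + 1)) ^ K * Ldet p (n + 1) ^ n := det_wvec p n
  have hιw : ExteriorAlgebra.ιMulti (Rp p (n + 1)) (n + 1) (wvec p n) =
      ((-1 : Rp p (n + 1)) ^ K * Ldet p (n + 1) ^ n) • Top := by
    rw [MuiAux.ιMulti_eq_det_smul (wvec p n), hdet, hTop]
  have haProd : aProd p (n + 1) Finset.univ = Top := by
    rw [aProd_eq_listI, MuiAux.listI_univ_sort, hTop, hbasis_single]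
  set c : ZMod p := (-1 : ZMod p) ^ K with hc
  have hc0 : c ≠ 0 := pow_ne_zero _ (neg_ne_zero.mpr one_ne_zero)
  have hCc : (MvPolynomial.C c : Rp p (n + 1)) = (-1 : Rp p (n + 1)) ^ K := by
    rw [hc, map_pow, map_neg, map_one]
  have hMuniv : MS Finset.univ =
      (MvPolynomial.C c : Rp p (n + 1)) • aProd p (n + 1) Finset.univ := by
    have h := hMS Finset.univ
    rw [map_Mui_prod, MuiAux.listI_univ_sort, hιw] at h
    rw [show (Finset.univ : Finset (Fin (n + 1))).card = n + 1 by simp] at h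
    have hrhs : Ldet p (n + 1) • (((-1 : Rp p (n + 1)) ^ K * Ldet p (n + 1) ^ n) • Top) =
        (Ldet p (n + 1)) ^ (n + 1) • ((MvPolynomial.C c : Rp p (n + 1)) • Top) := by
      rw [smul_smul, smul_smul, hCc]
      exact congrArg (· • Top) (by ring)
    rw [hrhs] at h
    have hz := hTF ((Ldet p (n + 1)) ^ (n + 1))
      (MS Finset.univ - (MvPolynomial.C c : Rp p (n + 1)) • Top)
      (pow_ne_zero _ hL) (by rw [smul_sub, h, sub_self])
    rw [haProd]
    exact sub_eq_zero.mp hz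
  refine ⟨⟨c, hc0, hMuniv⟩, ?_⟩
  intro S hS0
  have h := hMS S
  rw [hS0, smul_zero, map_Mui_prod] at h
  have hdisj : List.Disjoint (S.sort (· ≤ ·)) (Sᶜ.sort (· ≤ ·)) := by
    intro a haS haC
    rw [Finset.mem_sort] at haS haC
    exact (Finset.mem_compl.mp haC) haS
  have hnd : ((S.sort (· ≤ ·)) ++ (Sᶜ.sort (· ≤ ·))).Nodup :=
    List.Nodup.append (Finset.sort_nodup _ _) (Finset.sort_nodup _ _) hdisj
  have hlen : ((S.sort (· ≤ ·)) ++ (Sᶜ.sort (· ≤ ·))).length = n + 1 := by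
    rw [List.length_append, Finset.length_sort, Finset.length_sort]
    simpa using Finset.card_add_card_compl S
  obtain ⟨σ, hσ⟩ := MuiAux.listI_full (wvec p n) _ hlen hnd
  rw [← hTop, hdet] at hσ
  have hmul := congrArg (· * MuiAux.listI (wvec p n) (Sᶜ.sort (· ≤ ·))) h.symm
  simp only [zero_mul] at hmul
  rw [smul_mul_assoc, ← MuiAux.listI_append, hσ] at hmul
  have hscalar : Ldet p (n + 1) * ((-1 : Rp p (n + 1)) ^ K * Ldet p (n + 1) ^ n) ≠ 0 :=
    mul_ne_zero hL (mul_ne_zero (pow_ne_zero _ (neg_ne_zero.mpr one_ne_zero)) (pow_ne_zero _ hL))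
  rcases Int.units_eq_one_or (Equiv.Perm.sign σ) with hs | hs <;> rw [hs] at hmul
  · rw [one_smul, smul_smul] at hmul
    exact hTop_ne (hTF _ _ hscalar hmul)
  · have hneg : ((-1 : ℤˣ) • (((-1 : Rp p (n + 1)) ^ K * Ldet p (n + 1) ^ n) • Top)) =
        -((((-1 : Rp p (n + 1)) ^ K * Ldet p (n + 1) ^ n) • Top)) := by
      rw [Units.smul_def]
      simp
    rw [hneg, smul_neg, neg_eq_zero, smul_smul] at hmul
    exact hTop_ne (hTF _ _ hscalar hmul)
end
end
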